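/- arXiv:1409.4123 — 3 statements merged into one kernel-verified Lean document; each statement's English description precedes it below -/
import Mathlib

section
/- Let t ≥ 1, r ≥ 2 and ℓ ≥ ⌈log₂ t⌉ + 3 be given. Then there is a constant c (depending on ℓ, r, t but not on m) such that for all m, forb(m, r, t·𝓣_ℓ(r)) ≥ r(r−1)(t−1)·m − c. -/
/-- An `r`-matrix with explicit row and column counts: a matrix with
entries in `{0,1,…,r-1}` (modelled as `Fin r`). -/
structure RMat (r : ℕ) where
  rows : ℕ
  cols : ℕ
  mat : Matrix (Fin rows) (Fin cols) (Fin r)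

/-- A matrix is *simple* if its columns are pairwise distinct. -/
def Simple {r m n : ℕ} (A : Matrix (Fin m) (Fin n) (Fin r)) : Prop :=
  Function.Injective fun j : Fin n => fun i : Fin m => A i j

/-- A matrix is *`s`-simple* if every column appears with multiplicity at most `s`. -/
def SSimple {r m n : ℕ} (s : ℕ) (A : Matrix (Fin m) (Fin n) (Fin r)) : Prop :=
  ∀ c : Fin m → Fin r,
    (Finset.univ.filter fun j : Fin n => (fun i : Fin m => A i j) = c).card ≤ s

/-- `F` is a *configuration* in `A` (written `F ≺ A`): some row and column
permutation of `F` is a submatrix of `A`; equivalently there are injections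
of the rows and the columns of `F` into those of `A` realizing `F`. -/
def ConfigSub {r k l m n : ℕ} (F : Matrix (Fin k) (Fin l) (Fin r))
    (A : Matrix (Fin m) (Fin n) (Fin r)) : Prop :=
  ∃ ρ : Fin k → Fin m, ∃ σ : Fin l → Fin n,
    Function.Injective ρ ∧ Function.Injective σ ∧ ∀ i j, A (ρ i) (σ j) = F i j

/-- Configuration relation for a packaged matrix `F : RMat r`. -/
def ConfigIn {r m n : ℕ} (F : RMat r) (A : Matrix (Fin m) (Fin n) (Fin r)) : Prop :=
  ConfigSub F.mat A

/-- `A` avoids every member of the family `𝓕`. -/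
def AvoidsF {r m n : ℕ} (𝓕 : Set (RMat r)) (A : Matrix (Fin m) (Fin n) (Fin r)) : Prop :=
  ∀ F ∈ 𝓕, ¬ ConfigIn F A

/-- `forb m r 𝓕`: the maximum number of columns of an `m`-rowed simple
`r`-matrix having no member of `𝓕` as a configuration. -/
noncomputable def forb (m r : ℕ) (𝓕 : Set (RMat r)) : ℕ :=
  sSup { n | ∃ A : Matrix (Fin m) (Fin n) (Fin r), Simple A ∧ AvoidsF 𝓕 A }

/-- `forbS m r 𝓕 s`: the analogous maximum over `m`-rowed `s`-simple `r`-matrices. -/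
noncomputable def forbS (m r : ℕ) (𝓕 : Set (RMat r)) (s : ℕ) : ℕ :=
  sSup { n | ∃ A : Matrix (Fin m) (Fin n) (Fin r), SSimple s A ∧ AvoidsF 𝓕 A }

/-- `forbP m r S 𝓕`: as `forb`, but over simple matrices all of whose entries lie
in the set `S ⊆ {0,…,r-1}`. -/
noncomputable def forbP (m r : ℕ) (S : Set (Fin r)) (𝓕 : Set (RMat r)) : ℕ :=
  sSup { n | ∃ A : Matrix (Fin m) (Fin n) (Fin r),
    Simple A ∧ (∀ i j, A i j ∈ S) ∧ AvoidsF 𝓕 A }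

/-- `forbmaxP m r S 𝓕 = max_{1 ≤ m' ≤ m} forbP m' r S 𝓕`. -/
noncomputable def forbmaxP (m r : ℕ) (S : Set (Fin r)) (𝓕 : Set (RMat r)) : ℕ :=
  (Finset.Icc 1 m).sup fun m' => forbP m' r S 𝓕

/-- `I_ℓ(a,b)`: the `ℓ×ℓ` matrix with `a`'s on the diagonal and `b`'s elsewhere. -/
def Imat (ℓ r : ℕ) (a b : Fin r) : Matrix (Fin ℓ) (Fin ℓ) (Fin r) :=
  fun i j => if i = j then a else b

/-- `T_ℓ(a,b)`: the `ℓ×ℓ` matrix with `a`'s strictly below the diagonal and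
`b`'s on and above the diagonal. -/
def Tmat (ℓ r : ℕ) (a b : Fin r) : Matrix (Fin ℓ) (Fin ℓ) (Fin r) :=
  fun i j => if (j : ℕ) < (i : ℕ) then a else b

/-- The family `𝓣_ℓ(r) = {I_ℓ(a,b) : a ≠ b} ∪ {T_ℓ(a,b) : a ≠ b}`. -/
def TFam (ℓ r : ℕ) : Set (RMat r) :=
  { F | ∃ a b : Fin r, a ≠ b ∧
      (F = ⟨ℓ, ℓ, Imat ℓ r a b⟩ ∨ F = ⟨ℓ, ℓ, Tmat ℓ r a b⟩) }

/-- `t·M`: the concatenation of `t` copies of `M`. -/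
def tCopy {r : ℕ} (t : ℕ) (M : RMat r) : RMat r :=
  ⟨M.rows, t * M.cols, fun i j => M.mat i (finProdFinEquiv.symm j).2⟩


namespace ForbTTFamAux

variable {r n t m ℓ : ℕ}

/-- Index type for the columns of the construction: an ordered pair `(a,b)` of
distinct values, a "normal" row `x`, and a multiplicity index `s`. -/
abbrev ColIdx (r n t : ℕ) := {p : Fin r × Fin r // p.1 ≠ p.2} × Fin n × Fin (t - 1)

/-- The column associated to an index: background `b` on the `n` normal rows with
a single `a` at row `x`; on the special rows, the binary encoding of `s`
with digit `1 ↦ a`, `0 ↦ b`. -/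
def col (m : ℕ) (c : ColIdx r n t) (i : Fin m) : Fin r :=
  if (i : ℕ) < n then (if (i : ℕ) = (c.2.1 : ℕ) then c.1.1.1 else c.1.1.2)
  else (if Nat.testBit (c.2.2 : ℕ) ((i : ℕ) - n) then c.1.1.1 else c.1.1.2)

lemma col_normal_ne {c : ColIdx r n t} {i : Fin m} (h1 : (i : ℕ) < n)
    (h2 : (i : ℕ) ≠ (c.2.1 : ℕ)) : col m c i = c.1.1.2 := by
  simp [col, h1, h2]

lemma col_normal_eq {c : ColIdx r n t} {i : Fin m} (h1 : (i : ℕ) < n)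
    (h2 : (i : ℕ) = (c.2.1 : ℕ)) : col m c i = c.1.1.1 := by
  simp only [col, if_pos h1, if_pos h2]

lemma col_special {c : ColIdx r n t} {i : Fin m} (h1 : ¬ (i : ℕ) < n) :
    col m c i = if Nat.testBit (c.2.2 : ℕ) ((i : ℕ) - n) then c.1.1.1 else c.1.1.2 := by
  simp [col, h1]

lemma colidx_eq {c c' : ColIdx r n t} (h1 : c.1.1.1 = c'.1.1.1) (h2 : c.1.1.2 = c'.1.1.2)
    (h3 : (c.2.1 : ℕ) = (c'.2.1 : ℕ)) (h4 : c.2.2 = c'.2.2) : c = c' := by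
  obtain ⟨⟨⟨a, b⟩, hab⟩, x, s⟩ := c
  obtain ⟨⟨⟨a', b'⟩, hab'⟩, x', s'⟩ := c'
  simp only at h1 h2 h3 h4
  cases h1; cases h2; cases h4; cases Fin.ext h3
  rfl

lemma col_injective (hn3 : 3 ≤ n) (hnm : n ≤ m) (hbits : t - 1 ≤ 2 ^ (m - n)) :
    Function.Injective (col (r := r) (n := n) (t := t) m) := by
  rintro ⟨⟨⟨a, b⟩, hab⟩, x, s⟩ ⟨⟨⟨a', b'⟩, hab'⟩, x', s'⟩ h
  obtain ⟨y, hy3, hyx, hyx'⟩ : ∃ y : ℕ, y < 3 ∧ y ≠ (x : ℕ) ∧ y ≠ (x' : ℕ) := by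
    have hsub : ¬ ({0, 1, 2} : Finset ℕ) ⊆ {(x : ℕ), (x' : ℕ)} := by
      intro hsub
      have h1 := Finset.card_le_card hsub
      have h2 : ({(x : ℕ), (x' : ℕ)} : Finset ℕ).card ≤ 2 :=
        (Finset.card_insert_le _ _).trans (by simp)
      have h3 : ({0, 1, 2} : Finset ℕ).card = 3 := by decide
      omega
    obtain ⟨y, hy1, hy2⟩ := Finset.not_subset.mp hsub
    simp only [Finset.mem_insert, Finset.mem_singleton, not_or] at hy1 hy2
    exact ⟨y, by omega, hy2.1, hy2.2⟩
  have hyn : y < n := lt_of_lt_of_le hy3 hn3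
  have hym : y < m := lt_of_lt_of_le hyn hnm
  have hbb : b = b' := by
    have hcy := congrFun h ⟨y, hym⟩
    rwa [col_normal_ne hyn hyx, col_normal_ne hyn hyx'] at hcy
  have hxx : (x : ℕ) = (x' : ℕ) ∧ a = a' := by
    have hxm : (x : ℕ) < m := lt_of_lt_of_le x.isLt hnm
    have hcx := congrFun h ⟨x, hxm⟩
    have hx1 : (((⟨(x : ℕ), hxm⟩ : Fin m)) : ℕ) < n := x.isLt
    rw [col_normal_eq hx1 rfl] at hcx
    by_cases hxe : (x : ℕ) = ((x' : ℕ))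
    · rw [col_normal_eq hx1 hxe] at hcx; exact ⟨hxe, hcx⟩
    · rw [col_normal_ne hx1 hxe] at hcx
      exact absurd (hcx.trans hbb.symm) hab
  have hss : s = s' := by
    apply Fin.ext; apply Nat.eq_of_testBit_eq; intro k
    by_cases hk : k < m - n
    · have hnk : n + k < m := by omega
      have hck := congrFun h ⟨n + k, hnk⟩
      rw [col_special (by simp), col_special (by simp)] at hck
      simp only [Nat.add_sub_cancel_left] at hck
      by_cases t1 : Nat.testBit (s : ℕ) k <;> by_cases t2 : Nat.testBit (s' : ℕ) k <;>
        simp [t1, t2] at hck ⊢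
      · exact absurd (hck.trans hbb.symm) hab
      · exact absurd (hck.symm.trans hbb) hab'
    · have l1 : (s : ℕ) < 2 ^ k :=
        lt_of_lt_of_le (lt_of_lt_of_le s.isLt hbits)
          (Nat.pow_le_pow_right (by norm_num) (by omega))
      have l2 : (s' : ℕ) < 2 ^ k :=
        lt_of_lt_of_le (lt_of_lt_of_le s'.isLt hbits)
          (Nat.pow_le_pow_right (by norm_num) (by omega))
      rw [Nat.testBit_eq_false_of_lt l1, Nat.testBit_eq_false_of_lt l2]
  exact colidx_eq hxx.2 hbb hxx.1 hss

/-- Pinning lemma: if the pattern `v` has value `u` at two distinct normal rows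
and value `u' ≠ u` at a normal row `ρ i₃`, then any column of the construction
matching `v` on the rows `ρ` has pair `(u', u)` and normal position `ρ i₃`. -/
lemma pin {ρ : Fin ℓ → Fin m} (hρ : Function.Injective ρ)
    {v : Fin ℓ → Fin r} {u u' : Fin r} (huu : u ≠ u')
    {i₁ i₂ i₃ : Fin ℓ} (h12 : i₁ ≠ i₂)
    (hn1 : (ρ i₁ : ℕ) < n) (hn2 : (ρ i₂ : ℕ) < n) (hn3 : (ρ i₃ : ℕ) < n)
    (hv1 : v i₁ = u) (hv2 : v i₂ = u) (hv3 : v i₃ = u')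
    (c : ColIdx r n t) (hc : ∀ i, col m c (ρ i) = v i) :
    c.1.1.1 = u' ∧ c.1.1.2 = u ∧ (c.2.1 : ℕ) = (ρ i₃ : ℕ) := by
  have hB : c.1.1.2 = u := by
    by_cases e1 : (ρ i₁ : ℕ) = (c.2.1 : ℕ)
    · have e2 : (ρ i₂ : ℕ) ≠ (c.2.1 : ℕ) := by
        intro e2
        exact h12 (hρ (Fin.ext (by omega)))
      rw [← hv2, ← hc i₂, col_normal_ne hn2 e2]
    · rw [← hv1, ← hc i₁, col_normal_ne hn1 e1]
  have hx : (c.2.1 : ℕ) = (ρ i₃ : ℕ) := by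
    by_contra e3
    have h3 := hc i₃
    rw [col_normal_ne hn3 (fun hh => e3 hh.symm), hv3] at h3
    exact huu ((hB.symm.trans h3))
  have hA : c.1.1.1 = u' := by
    rw [← hv3, ← hc i₃, col_normal_eq hn3 hx.symm]
  exact ⟨hA, hB, hx⟩

/-- Core counting argument: the construction cannot realize `t` copies of a
pattern column having value `u` at two normal rows and `u' ≠ u` at a third. -/
lemma no_config (ht1 : 1 ≤ t) {N : ℕ} (e : Fin N ≃ ColIdx r n t)
    {ρ : Fin ℓ → Fin m} {σ : Fin (t * ℓ) → Fin N}
    (hρ : Function.Injective ρ) (hσ : Function.Injective σ)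
    (M : Matrix (Fin ℓ) (Fin ℓ) (Fin r))
    (hmat : ∀ i j, col m (e (σ j)) (ρ i) = M i ((finProdFinEquiv.symm j).2))
    (q i₁ i₂ : Fin ℓ) (u u' : Fin r) (huu : u ≠ u') (h12 : i₁ ≠ i₂)
    (hn1 : (ρ i₁ : ℕ) < n) (hn2 : (ρ i₂ : ℕ) < n) (hnq : (ρ q : ℕ) < n)
    (hv1 : M i₁ q = u) (hv2 : M i₂ q = u) (hvq : M q q = u') : False := by
  have hmatch : ∀ j : Fin t, ∀ i,
      col m (e (σ (finProdFinEquiv (j, q)))) (ρ i) = M i q := by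
    intro j i
    have hh := hmat i (finProdFinEquiv (j, q))
    rwa [Equiv.symm_apply_apply] at hh
  have hpin : ∀ j : Fin t,
      (e (σ (finProdFinEquiv (j, q)))).1.1.1 = u' ∧
      (e (σ (finProdFinEquiv (j, q)))).1.1.2 = u ∧
      ((e (σ (finProdFinEquiv (j, q)))).2.1 : ℕ) = (ρ q : ℕ) :=
    fun j => pin (v := fun i => M i q) hρ huu h12 hn1 hn2 hnq hv1 hv2 hvq _ (hmatch j)
  have hfinj : Function.Injective
      (fun j : Fin t => (e (σ (finProdFinEquiv (j, q)))).2.2) := by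
    intro j j' hjj
    obtain ⟨a1, b1, x1⟩ := hpin j
    obtain ⟨a2, b2, x2⟩ := hpin j'
    have hcc : e (σ (finProdFinEquiv (j, q))) = e (σ (finProdFinEquiv (j', q))) :=
      colidx_eq (a1.trans a2.symm) (b1.trans b2.symm) (x1.trans x2.symm) hjj
    have h5 := hσ (e.injective hcc)
    have h6 := finProdFinEquiv.injective h5
    exact congrArg Prod.fst h6
  have hcard := Fintype.card_le_of_injective _ hfinj
  simp only [Fintype.card_fin] at hcard
  omega

lemma three_elts {α : Type*} [LinearOrder α] {G : Finset α} (h : 3 ≤ G.card) :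
    ∃ q i₁ i₂, q ∈ G ∧ i₁ ∈ G ∧ i₂ ∈ G ∧ q < i₁ ∧ i₁ < i₂ := by
  have hne : G.Nonempty := Finset.card_pos.mp (by omega)
  have hm2 : G.max' hne ∈ G := G.max'_mem hne
  have hc1 : 2 ≤ (G.erase (G.max' hne)).card := by
    rw [Finset.card_erase_of_mem hm2]; omega
  have hne1 : (G.erase (G.max' hne)).Nonempty := Finset.card_pos.mp (by omega)
  set i₂ := G.max' hne with hi2
  set i₁ := (G.erase i₂).max' hne1 with hi1
  have hm1' : i₁ ∈ G.erase i₂ := Finset.max'_mem _ _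
  have hm1 : i₁ ∈ G := Finset.mem_of_mem_erase hm1'
  have h12 : i₁ < i₂ := lt_of_le_of_ne (G.le_max' _ hm1) (Finset.ne_of_mem_erase hm1')
  have hc2 : 1 ≤ ((G.erase i₂).erase i₁).card := by
    rw [Finset.card_erase_of_mem hm1']; omega
  have hne2 : ((G.erase i₂).erase i₁).Nonempty := Finset.card_pos.mp (by omega)
  set q := ((G.erase i₂).erase i₁).max' hne2 with hq
  have hmq' : q ∈ (G.erase i₂).erase i₁ := Finset.max'_mem _ _
  have hmq1 : q ∈ G.erase i₂ := Finset.mem_of_mem_erase hmq'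
  have hmq : q ∈ G := Finset.mem_of_mem_erase hmq1
  have hq1 : q < i₁ :=
    lt_of_le_of_ne ((G.erase i₂).le_max' _ hmq1) (Finset.ne_of_mem_erase hmq')
  exact ⟨q, i₁, i₂, hmq, hm1, hm2, hq1, h12⟩

end ForbTTFamAux


namespace ForbTTFamAux

lemma card_pairne (r : ℕ) :
    Fintype.card {p : Fin r × Fin r // p.1 ≠ p.2} = r * r - r := by
  have h1 : Fintype.card {p : Fin r × Fin r // p.1 = p.2} = r := by
    have e : {p : Fin r × Fin r // p.1 = p.2} ≃ Fin r :=
      { toFun := fun x => x.1.1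
        invFun := fun a => ⟨(a, a), rfl⟩
        left_inv := fun x => Subtype.ext (Prod.ext rfl x.2)
        right_inv := fun a => rfl }
    rw [Fintype.card_congr e, Fintype.card_fin]
  have h2 := Fintype.card_subtype_compl (fun p : Fin r × Fin r => p.1 = p.2)
  rw [h1, Fintype.card_prod, Fintype.card_fin] at h2
  exact h2

lemma normal_three {ℓ m n w : ℕ} (hmn : m - n = w) (hnm : n ≤ m) (hw3 : w + 3 ≤ ℓ)
    {ρ : Fin ℓ → Fin m} (hρ : Function.Injective ρ) :
    ∃ q i₁ i₂ : Fin ℓ, q < i₁ ∧ i₁ < i₂ ∧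
      (ρ q : ℕ) < n ∧ (ρ i₁ : ℕ) < n ∧ (ρ i₂ : ℕ) < n := by
  classical
  have hS : (Finset.univ.filter (fun i : Fin ℓ => ¬ (ρ i : ℕ) < n)).card ≤ w := by
    have hinj := Finset.card_le_card_of_injOn
      (s := Finset.univ.filter (fun i : Fin ℓ => ¬ (ρ i : ℕ) < n))
      (t := Finset.range w) (fun i => (ρ i : ℕ) - n) ?_ ?_
    · simpa using hinj
    · intro i hi
      simp only [Finset.mem_coe, Finset.mem_filter, Finset.mem_univ, true_and] at hi
      have hlt := (ρ i).isLt
      simp only [Finset.mem_coe, Finset.mem_range]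
      omega
    · intro i hi j hj hij
      simp only [Finset.coe_filter, Finset.mem_univ, true_and, Set.mem_setOf_eq] at hi hj
      simp only at hij
      apply hρ
      apply Fin.ext
      omega
  have hGc : 3 ≤ (Finset.univ.filter (fun i : Fin ℓ => (ρ i : ℕ) < n)).card := by
    have hsplit := Finset.card_filter_add_card_filter_not
      (s := (Finset.univ : Finset (Fin ℓ))) (p := fun i : Fin ℓ => (ρ i : ℕ) < n)
    simp only [Finset.card_univ, Fintype.card_fin] at hsplit
    omega
  obtain ⟨q, i₁, i₂, hq, h1, h2, h12, h23⟩ := three_elts hGc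
  simp only [Finset.mem_filter, Finset.mem_univ, true_and] at hq h1 h2
  exact ⟨q, i₁, i₂, h12, h23, hq, h1, h2⟩

lemma exists_matrix {r t ℓ m : ℕ} (ht2 : 2 ≤ t) (hℓ : Nat.clog 2 t + 3 ≤ ℓ)
    (hm : Nat.clog 2 t + 3 ≤ m) :
    ∃ A : Matrix (Fin m) (Fin ((r * r - r) * ((m - Nat.clog 2 t) * (t - 1)))) (Fin r),
      Simple A ∧ AvoidsF (tCopy t '' TFam ℓ r) A := by
  classical
  set w := Nat.clog 2 t with hw
  set n := m - w with hn
  have hnm : n ≤ m := Nat.sub_le _ _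
  have hn3 : 3 ≤ n := by omega
  have hmn : m - n = w := by omega
  have hpow : t ≤ 2 ^ w := Nat.le_pow_clog (by norm_num) t
  have hbits : t - 1 ≤ 2 ^ (m - n) := by rw [hmn]; omega
  have hcard : Fintype.card (ColIdx r n t) = (r * r - r) * ((m - w) * (t - 1)) := by
    have hc1 : Fintype.card (ColIdx r n t) =
        Fintype.card {p : Fin r × Fin r // p.1 ≠ p.2} *
          (Fintype.card (Fin n) * Fintype.card (Fin (t - 1))) := by
      rw [Fintype.card_prod, Fintype.card_prod]
    rw [hc1, card_pairne, Fintype.card_fin, Fintype.card_fin]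
  let e : Fin ((r * r - r) * ((m - w) * (t - 1))) ≃ ColIdx r n t :=
    (Fintype.equivFinOfCardEq hcard).symm
  refine ⟨fun i j => col m (e j) i, ?_, ?_⟩
  · exact (col_injective hn3 hnm hbits).comp e.injective
  · rintro F ⟨F₀, hF₀, rfl⟩ hconf
    obtain ⟨a, b, hab, hc⟩ := hF₀
    have hw3 : w + 3 ≤ ℓ := hℓ
    rcases hc with hMc | hMc <;> subst hMc <;>
      obtain ⟨ρ, σ, hρ, hσ, hmat⟩ := hconf <;>
      obtain ⟨q, i₁, i₂, hq1, h12, hnq, hn1, hn2⟩ := normal_three hmn hnm hw3 hρ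
    · -- Imat case
      exact no_config (by omega) e hρ hσ (Imat ℓ r a b) hmat q i₁ i₂ b a
        (Ne.symm hab) (ne_of_lt h12) hn1 hn2 hnq
        (by simp [Imat, hq1.ne']) (by simp [Imat, (hq1.trans h12).ne'])
        (by simp [Imat])
    · -- Tmat case
      have hq1' : (q : ℕ) < (i₁ : ℕ) := hq1
      have hq2' : (q : ℕ) < (i₂ : ℕ) := hq1.trans h12
      exact no_config (by omega) e hρ hσ (Tmat ℓ r a b) hmat q i₁ i₂ a b
        hab (ne_of_lt h12) hn1 hn2 hnq
        (by simp [Tmat, hq1']) (by simp [Tmat, hq2'])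
        (by simp [Tmat])

lemma le_forb {r m N : ℕ} {𝓕 : Set (RMat r)}
    (A : Matrix (Fin m) (Fin N) (Fin r)) (h1 : Simple A) (h2 : AvoidsF 𝓕 A) :
    N ≤ forb m r 𝓕 := by
  apply le_csSup
  · refine ⟨r ^ m, fun k hk => ?_⟩
    obtain ⟨B, hB, -⟩ := hk
    have hcard := Fintype.card_le_of_injective _ hB
    simpa [Fintype.card_fun] using hcard
  · exact ⟨A, h1, h2⟩

end ForbTTFamAux

/-- Let `t ≥ 1`, `r ≥ 2` and `ℓ ≥ ⌈log₂ t⌉ + 3`. Then there is a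
constant `c` (depending on `ℓ, r, t` but not on `m`) such that for all `m`,
`forb(m, r, t·𝓣_ℓ(r)) ≥ r(r−1)(t−1)·m − c` (stated subtraction-free over `ℕ`). -/
theorem forb_tTFam_lower_linear (t r ℓ : ℕ) (ht : 1 ≤ t) (hr : 2 ≤ r)
    (hℓ : Nat.clog 2 t + 3 ≤ ℓ) :
    ∃ c : ℕ, ∀ m : ℕ,
      r * (r - 1) * (t - 1) * m ≤ forb m r (tCopy t '' TFam ℓ r) + c := by
  rcases Nat.lt_or_ge t 2 with ht2 | ht2
  · refine ⟨0, fun m => ?_⟩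
    have h0 : t - 1 = 0 := by omega
    simp [h0]
  · set w := Nat.clog 2 t with hw
    refine ⟨r * (r - 1) * (t - 1) * (w + 3), fun m => ?_⟩
    rcases Nat.lt_or_ge m (w + 3) with hm | hm
    · have h1 : r * (r - 1) * (t - 1) * m ≤ r * (r - 1) * (t - 1) * (w + 3) :=
        Nat.mul_le_mul_left _ (by omega)
      exact h1.trans (Nat.le_add_left _ _)
    · obtain ⟨A, hS, hA⟩ := ForbTTFamAux.exists_matrix (r := r) ht2 hℓ hm
      have h1 := ForbTTFamAux.le_forb A hS hA
      have hrr : r * r - r = r * (r - 1) := by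
        rcases r with _ | r'
        · simp
        · have hh : (r' + 1) * (r' + 1) = (r' + 1) * r' + (r' + 1) := by ring
          rw [hh, Nat.add_sub_cancel, Nat.succ_sub_one]
      have h1' : r * (r - 1) * ((m - w) * (t - 1)) ≤ forb m r (tCopy t '' TFam ℓ r) := by
        rw [← hrr]; exact h1
      calc r * (r - 1) * (t - 1) * m
          ≤ r * (r - 1) * (t - 1) * ((m - w) + (w + 3)) :=
            Nat.mul_le_mul_left _ (by omega)
        _ = r * (r - 1) * ((m - w) * (t - 1)) + r * (r - 1) * (t - 1) * (w + 3) := by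
            ring
        _ ≤ forb m r (tCopy t '' TFam ℓ r) + r * (r - 1) * (t - 1) * (w + 3) :=
            Nat.add_le_add_right h1' _
end

section
/- For every r ≥ 2 there is a constant c_r (one may take c_r = 30·(r choose 2)²·log₂ r) such that for every ℓ ≥ 2, every matrix with entries in {0,1,…,r−1} having more than 2^{c_r·ℓ⁴} distinct columns contains as a submatrix (rows i₁ < … < i_ℓ and columns j₁ < … < j_ℓ, both in increasing order) one of the matrices I_ℓ(a,b), T_ℓ(a,b), I_ℓ^R(a,b), or T_ℓ^R(a,b) for some a ≠ b ∈ {0,…,r−1}. -/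
set_option maxHeartbeats 1000000

open Classical
attribute [local instance] Classical.propDecidable

namespace Sub14

variable {r : ℕ} [NeZero r]

def TR (k : ℕ) (a b : Fin r) {m : ℕ} (F : Finset (Fin m → Fin r)) : Prop :=
  ∃ (i : Fin k → Fin m) (y : Fin k → (Fin m → Fin r)),
    StrictMono i ∧ Function.Injective y ∧ (∀ q, y q ∈ F) ∧
    ∀ p q : Fin k, y q (i p) = if (q : ℕ) < (p : ℕ) then a else b

def IR (k : ℕ) (a b : Fin r) {m : ℕ} (F : Finset (Fin m → Fin r)) : Prop :=
  ∃ (i : Fin k → Fin m) (y : Fin k → (Fin m → Fin r)),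
    StrictMono i ∧ Function.Injective y ∧ (∀ q, y q ∈ F) ∧
    ∀ p q : Fin k, y q (i p) = if p = q then a else b

def IPR (k : ℕ) (a b : Fin r) {m : ℕ} (F : Finset (Fin m → Fin r)) : Prop :=
  ∃ (i : Fin k → Fin m) (y : Fin k → (Fin m → Fin r)) (z : Fin m → Fin r),
    StrictMono i ∧ Function.Injective y ∧ (∀ q, y q ∈ F) ∧ z ∈ F ∧ (∀ q, y q ≠ z) ∧
    (∀ p q : Fin k, y q (i p) = if p = q then a else b) ∧ (∀ p, z (i p) = b)

def Found (L : ℕ) {m : ℕ} (F : Finset (Fin m → Fin r)) : Prop :=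
  ∃ a b : Fin r, a ≠ b ∧ (IR L a b F ∨ TR L a b F)

lemma IPR.toIR {k : ℕ} {a b : Fin r} {m : ℕ} {F : Finset (Fin m → Fin r)} (h : IPR k a b F) :
    IR k a b F := by
  obtain ⟨i, y, z, hi, hy, hyF, _, _, hval, _⟩ := h
  exact ⟨i, y, hi, hy, hyF, hval⟩

def Stair (a b : Fin r) (k : ℕ) {m : ℕ} (F : Finset (Fin m → Fin r)) : Prop :=
  ∃ (j : Fin k → Fin m) (u v : Fin k → (Fin m → Fin r)),
    StrictMono j ∧
    ∀ t, u t ∈ F ∧ v t ∈ F ∧ u t (j t) = a ∧ v t (j t) = b ∧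
      ∀ x, x < j t → u t x = v t x

lemma stair_zero (a b : Fin r) {m : ℕ} (F : Finset (Fin m → Fin r)) : Stair a b 0 F :=
  ⟨Fin.elim0, Fin.elim0, Fin.elim0, fun i => i.elim0, fun t => t.elim0⟩

section Lift

variable {m : ℕ} {F : Finset (Fin (m + 1) → Fin r)}

def res (f : Fin (m + 1) → Fin r) : Fin m → Fin r := f ∘ Fin.castSucc

lemma snoc_res (f : Fin (m + 1) → Fin r) : Fin.snoc (res f) (f (Fin.last m)) = f := by
  funext i
  refine Fin.lastCases ?_ (fun i => ?_) i
  · simp [Fin.snoc_last]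
  · simp [Fin.snoc_castSucc, res]

def Liftable (F : Finset (Fin (m + 1) → Fin r)) (H : Finset (Fin m → Fin r)) : Prop :=
  ∀ g ∈ H, ∃ v, Fin.snoc g v ∈ F

noncomputable def liftFun (F : Finset (Fin (m + 1) → Fin r)) (g : Fin m → Fin r) :
    Fin (m + 1) → Fin r :=
  Fin.snoc g (if h : ∃ v, Fin.snoc g v ∈ F then h.choose else 0)

lemma liftFun_res (F : Finset (Fin (m + 1) → Fin r)) (g : Fin m → Fin r) :
    res (liftFun F g) = g := by
  funext i; simp [res, liftFun, Fin.snoc_castSucc]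

lemma liftFun_injective (F : Finset (Fin (m + 1) → Fin r)) :
    Function.Injective (liftFun F) := by
  intro g g' h
  have := congrArg res h
  rwa [liftFun_res, liftFun_res] at this

lemma liftFun_mem {H : Finset (Fin m → Fin r)} (hL : Liftable F H) {g : Fin m → Fin r}
    (hg : g ∈ H) : liftFun F g ∈ F := by
  have h := hL g hg
  simp only [liftFun, dif_pos h]
  exact h.choose_spec

lemma liftFun_castSucc (F : Finset (Fin (m + 1) → Fin r)) (g : Fin m → Fin r) (i : Fin m) :
    liftFun F g (Fin.castSucc i) = g i := by
  simp [liftFun, Fin.snoc_castSucc]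

lemma TR.lift {k : ℕ} {a b : Fin r} {H : Finset (Fin m → Fin r)} (hL : Liftable F H)
    (h : TR k a b H) : TR k a b F := by
  obtain ⟨i, y, hi, hy, hyH, hval⟩ := h
  refine ⟨fun p => Fin.castSucc (i p), fun q => liftFun F (y q),
    fun p p' hpp' => Fin.castSucc_lt_castSucc_iff.2 (hi hpp'),
    fun q q' hqq' => hy (liftFun_injective F hqq'),
    fun q => liftFun_mem hL (hyH q), fun p q => ?_⟩
  show liftFun F (y q) (Fin.castSucc (i p)) = _
  rw [liftFun_castSucc]; exact hval p q

lemma IR.lift {k : ℕ} {a b : Fin r} {H : Finset (Fin m → Fin r)} (hL : Liftable F H)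
    (h : IR k a b H) : IR k a b F := by
  obtain ⟨i, y, hi, hy, hyH, hval⟩ := h
  refine ⟨fun p => Fin.castSucc (i p), fun q => liftFun F (y q),
    fun p p' hpp' => Fin.castSucc_lt_castSucc_iff.2 (hi hpp'),
    fun q q' hqq' => hy (liftFun_injective F hqq'),
    fun q => liftFun_mem hL (hyH q), fun p q => ?_⟩
  show liftFun F (y q) (Fin.castSucc (i p)) = _
  rw [liftFun_castSucc]; exact hval p q

lemma IPR.lift {k : ℕ} {a b : Fin r} {H : Finset (Fin m → Fin r)} (hL : Liftable F H)
    (h : IPR k a b H) : IPR k a b F := by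
  obtain ⟨i, y, z, hi, hy, hyH, hzH, hyz, hval, hzval⟩ := h
  refine ⟨fun p => Fin.castSucc (i p), fun q => liftFun F (y q), liftFun F z,
    fun p p' hpp' => Fin.castSucc_lt_castSucc_iff.2 (hi hpp'),
    fun q q' hqq' => hy (liftFun_injective F hqq'),
    fun q => liftFun_mem hL (hyH q), liftFun_mem hL hzH,
    fun q hq => hyz q (liftFun_injective F hq), fun p q => ?_, fun p => ?_⟩
  · show liftFun F (y q) (Fin.castSucc (i p)) = _
    rw [liftFun_castSucc]; exact hval p q
  · show liftFun F z (Fin.castSucc (i p)) = _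
    rw [liftFun_castSucc]; exact hzval p

lemma Found.lift {L : ℕ} {H : Finset (Fin m → Fin r)} (hL : Liftable F H)
    (h : Found L H) : Found L F := by
  obtain ⟨a, b, hab, h | h⟩ := h
  · exact ⟨a, b, hab, Or.inl (h.lift hL)⟩
  · exact ⟨a, b, hab, Or.inr (h.lift hL)⟩

lemma Stair.lift {a b : Fin r} {k : ℕ} {H : Finset (Fin m → Fin r)} (hL : Liftable F H)
    (h : Stair a b k H) : Stair a b k F := by
  obtain ⟨j, u, v, hj, hprop⟩ := h
  refine ⟨fun t => Fin.castSucc (j t), fun t => liftFun F (u t), fun t => liftFun F (v t),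
    fun t t' htt' => Fin.castSucc_lt_castSucc_iff.2 (hj htt'), fun t => ?_⟩
  obtain ⟨hu, hv, hua, hvb, hagree⟩ := hprop t
  refine ⟨liftFun_mem hL hu, liftFun_mem hL hv, ?_, ?_, fun x hx => ?_⟩
  · show liftFun F (u t) (Fin.castSucc (j t)) = _
    rw [liftFun_castSucc]; exact hua
  · show liftFun F (v t) (Fin.castSucc (j t)) = _
    rw [liftFun_castSucc]; exact hvb
  · have hxm : (x : ℕ) < m := by
      have h1 : (x : ℕ) < (j t : ℕ) := hx
      have h2 : (j t : ℕ) < m := (j t).isLt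
      omega
    have hxeq : x = Fin.castSucc (⟨(x : ℕ), hxm⟩ : Fin m) := by
      apply Fin.ext; simp
    show liftFun F (u t) x = liftFun F (v t) x
    rw [hxeq, liftFun_castSucc, liftFun_castSucc]
    exact hagree _ (by
      have : ((⟨(x : ℕ), hxm⟩ : Fin m) : ℕ) < (j t : ℕ) := hx
      exact this)

lemma snoc_inj {g g' : Fin m → Fin r} {v v' : Fin r}
    (h : (Fin.snoc g v : Fin (m + 1) → Fin r) = Fin.snoc g' v') : g = g' ∧ v = v' := by
  constructor
  · funext i
    have := congrFun h (Fin.castSucc i)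
    simpa [Fin.snoc_castSucc] using this
  · have := congrFun h (Fin.last m)
    simpa [Fin.snoc_last] using this

/-- extended row map: old rows cast up, a new last row appended at the end. -/
noncomputable def extRows {k : ℕ} (i : Fin k → Fin m) : Fin (k + 1) → Fin (m + 1) :=
  fun p => if h : (p : ℕ) < k then Fin.castSucc (i ⟨(p : ℕ), h⟩) else Fin.last m

lemma extRows_strictMono {k : ℕ} {i : Fin k → Fin m} (hi : StrictMono i) :
    StrictMono (extRows i) := by
  intro p q hpq
  unfold extRows
  have hq : (q : ℕ) ≤ k := Nat.lt_succ_iff.mp q.isLt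
  by_cases hpk : (p : ℕ) < k
  · by_cases hqk : (q : ℕ) < k
    · simp only [dif_pos hpk, dif_pos hqk]
      exact Fin.castSucc_lt_castSucc_iff.2 (hi (by exact hpq))
    · simp only [dif_pos hpk, dif_neg hqk]
      exact Fin.castSucc_lt_last _
  · by_cases hqk : (q : ℕ) < k
    · exfalso; have : (p : ℕ) < (q : ℕ) := hpq; omega
    · exfalso
      have : (p : ℕ) < (q : ℕ) := hpq
      have hp : (p : ℕ) ≤ k := Nat.lt_succ_iff.mp p.isLt
      omega

lemma extRows_lt {k : ℕ} (i : Fin k → Fin m) (p : Fin (k + 1)) (h : (p : ℕ) < k) :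
    extRows i p = Fin.castSucc (i ⟨(p : ℕ), h⟩) := by simp [extRows, h]

lemma extRows_last {k : ℕ} (i : Fin k → Fin m) (p : Fin (k + 1)) (h : ¬ (p : ℕ) < k) :
    extRows i p = Fin.last m := by simp [extRows, h]

/-- Extension of a `T`-realization through a doubled last row. -/
lemma TR.extend {k : ℕ} {a b : Fin r} {H : Finset (Fin m → Fin r)}
    (hab : a ≠ b)
    (hDab : ∀ g ∈ H, Fin.snoc g a ∈ F ∧ Fin.snoc g b ∈ F)
    (hk : 1 ≤ k) (h : TR k a b H) : TR (k + 1) a b F := by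
  obtain ⟨i, y, hi, hy, hyH, hval⟩ := h
  have hklt : k - 1 < k := by omega
  refine ⟨extRows i,
    fun q => if h : (q : ℕ) < k then Fin.snoc (y ⟨(q : ℕ), h⟩) a else Fin.snoc (y ⟨k - 1, hklt⟩) b,
    extRows_strictMono hi, ?_, ?_, ?_⟩
  · -- injective columns
    intro q q' hqq'
    by_cases hq : (q : ℕ) < k <;> by_cases hq' : (q' : ℕ) < k
    · simp only [dif_pos hq, dif_pos hq'] at hqq'
      have := (snoc_inj hqq').1
      have := hy this
      apply Fin.ext
      have : ((⟨(q : ℕ), hq⟩ : Fin k) : ℕ) = ((⟨(q' : ℕ), hq'⟩ : Fin k) : ℕ) := by rw [this]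
      simpa using this
    · exfalso
      simp only [dif_pos hq, dif_neg hq'] at hqq'
      exact hab ((snoc_inj hqq').2)
    · exfalso
      simp only [dif_neg hq, dif_pos hq'] at hqq'
      exact hab ((snoc_inj hqq').2.symm)
    · apply Fin.ext
      have h1 : (q : ℕ) ≤ k := Nat.lt_succ_iff.mp q.isLt
      have h2 : (q' : ℕ) ≤ k := Nat.lt_succ_iff.mp q'.isLt
      omega
  · -- membership
    intro q
    by_cases hq : (q : ℕ) < k
    · simp only [dif_pos hq]; exact (hDab _ (hyH _)).1
    · simp only [dif_neg hq]; exact (hDab _ (hyH _)).2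
  · -- entries
    intro p q
    by_cases hq : (q : ℕ) < k <;> by_cases hp : (p : ℕ) < k
    · simp only [dif_pos hq]
      rw [extRows_lt i p hp, Fin.snoc_castSucc]
      rw [hval ⟨(p : ℕ), hp⟩ ⟨(q : ℕ), hq⟩]
    · simp only [dif_pos hq]
      rw [extRows_last i p hp, Fin.snoc_last]
      have hpk : (p : ℕ) = k := by
        have := Nat.lt_succ_iff.mp p.isLt; omega
      rw [if_pos (by omega)]
    · simp only [dif_neg hq]
      rw [extRows_lt i p hp, Fin.snoc_castSucc]
      have hqk : (q : ℕ) = k := by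
        have := Nat.lt_succ_iff.mp q.isLt; omega
      rw [hval ⟨(p : ℕ), hp⟩ ⟨k - 1, hklt⟩]
      rw [if_neg (by simp; omega), if_neg (by omega)]
    · simp only [dif_neg hq]
      rw [extRows_last i p hp, Fin.snoc_last]
      have hqk : (q : ℕ) = k := by
        have := Nat.lt_succ_iff.mp q.isLt; omega
      rw [if_neg (by omega)]

/-- Extension of an `I⁺`-realization through a doubled last row. -/
lemma IPR.extend {k : ℕ} {a b : Fin r} {H : Finset (Fin m → Fin r)}
    (hab : a ≠ b)
    (hDab : ∀ g ∈ H, Fin.snoc g a ∈ F ∧ Fin.snoc g b ∈ F)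
    (h : IPR k a b H) : IPR (k + 1) a b F := by
  obtain ⟨i, y, z, hi, hy, hyH, hzH, hyz, hval, hzval⟩ := h
  refine ⟨extRows i,
    fun q => if h : (q : ℕ) < k then Fin.snoc (y ⟨(q : ℕ), h⟩) b else Fin.snoc z a,
    Fin.snoc z b,
    extRows_strictMono hi, ?_, ?_, (hDab _ hzH).2, ?_, ?_, ?_⟩
  · intro q q' hqq'
    by_cases hq : (q : ℕ) < k <;> by_cases hq' : (q' : ℕ) < k
    · simp only [dif_pos hq, dif_pos hq'] at hqq'
      have h2 := hy (snoc_inj hqq').1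
      apply Fin.ext
      have : ((⟨(q : ℕ), hq⟩ : Fin k) : ℕ) = ((⟨(q' : ℕ), hq'⟩ : Fin k) : ℕ) := by rw [h2]
      simpa using this
    · exfalso
      simp only [dif_pos hq, dif_neg hq'] at hqq'
      exact hab ((snoc_inj hqq').2.symm)
    · exfalso
      simp only [dif_neg hq, dif_pos hq'] at hqq'
      exact hab ((snoc_inj hqq').2)
    · apply Fin.ext
      have h1 : (q : ℕ) ≤ k := Nat.lt_succ_iff.mp q.isLt
      have h2 : (q' : ℕ) ≤ k := Nat.lt_succ_iff.mp q'.isLt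
      omega
  · intro q
    by_cases hq : (q : ℕ) < k
    · simp only [dif_pos hq]; exact (hDab _ (hyH _)).2
    · simp only [dif_neg hq]; exact (hDab _ hzH).1
  · -- y q ≠ z'
    intro q hq'
    by_cases hq : (q : ℕ) < k
    · simp only [dif_pos hq] at hq'
      exact hyz _ (snoc_inj hq').1
    · simp only [dif_neg hq] at hq'
      exact hab (snoc_inj hq').2
  · -- entries
    intro p q
    by_cases hq : (q : ℕ) < k <;> by_cases hp : (p : ℕ) < k
    · simp only [dif_pos hq]
      rw [extRows_lt i p hp, Fin.snoc_castSucc]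
      rw [hval ⟨(p : ℕ), hp⟩ ⟨(q : ℕ), hq⟩]
      by_cases hpq : (⟨(p : ℕ), hp⟩ : Fin k) = ⟨(q : ℕ), hq⟩
      · rw [if_pos hpq, if_pos (by apply Fin.ext; simpa using congrArg Fin.val hpq)]
      · rw [if_neg hpq, if_neg (by
          intro hc
          exact hpq (by apply Fin.ext; simpa using congrArg Fin.val hc))]
    · simp only [dif_pos hq]
      rw [extRows_last i p hp, Fin.snoc_last]
      rw [if_neg (by
        intro hc
        have := congrArg Fin.val hc; omega)]
    · simp only [dif_neg hq]
      rw [extRows_lt i p hp, Fin.snoc_castSucc, hzval]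
      rw [if_neg (by
        intro hc
        have := congrArg Fin.val hc; omega)]
    · simp only [dif_neg hq]
      rw [extRows_last i p hp, Fin.snoc_last]
      have hpk : (p : ℕ) = k := by have := Nat.lt_succ_iff.mp p.isLt; omega
      have hqk : (q : ℕ) = k := by have := Nat.lt_succ_iff.mp q.isLt; omega
      rw [if_pos (by apply Fin.ext; omega)]
  · intro p
    by_cases hp : (p : ℕ) < k
    · rw [extRows_lt i p hp, Fin.snoc_castSucc]; exact hzval _
    · rw [extRows_last i p hp, Fin.snoc_last]

end Lift
end Sub14

namespace Sub14

lemma fg_spec' {P : ℕ → Prop} [DecidablePred P] {n : ℕ} (h : Nat.findGreatest P n ≠ 0) :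
    P (Nat.findGreatest P n) := (Nat.findGreatest_eq_iff.1 rfl).2.1 h

variable {r : ℕ} [NeZero r]

/-- pairs of letters `a < b` -/
def pairs (r : ℕ) : Finset (Fin r × Fin r) :=
  Finset.univ.filter (fun ab => ab.1 < ab.2)

section Decomp

variable {m : ℕ} (F : Finset (Fin (m + 1) → Fin r))

/-- the deduplicated restriction of `F` to the first `m` rows. -/
def Gres : Finset (Fin m → Fin r) := F.image res

/-- the set of values `v` such that the column `g` extended by `v` lies in `F`. -/
def Vg (g : Fin m → Fin r) : Finset (Fin r) :=
  Finset.univ.filter (fun v => Fin.snoc g v ∈ F)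

lemma liftable_Gres : Liftable F (Gres F) := by
  intro g hg
  obtain ⟨f, hf, rfl⟩ := Finset.mem_image.1 hg
  exact ⟨f (Fin.last m), by rw [snoc_res]; exact hf⟩

lemma mem_Gres_of_snoc {g : Fin m → Fin r} {v : Fin r} (h : Fin.snoc g v ∈ F) :
    g ∈ Gres F := by
  refine Finset.mem_image.2 ⟨Fin.snoc g v, h, ?_⟩
  funext i; simp [res, Fin.snoc_castSucc]

lemma card_F_eq : F.card = ∑ g ∈ Gres F, (Vg F g).card := by
  rw [Finset.card_eq_sum_card_fiberwise (f := res) (t := Gres F)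
    (fun f hf => Finset.mem_image_of_mem _ hf)]
  refine Finset.sum_congr rfl (fun g _ => ?_)
  rw [Finset.card_bij (fun f _ => f (Fin.last m))]
  · intro f hf
    simp only [Finset.mem_filter] at hf
    simp only [Vg, Finset.mem_filter, Finset.mem_univ, true_and]
    rw [← hf.2, snoc_res]; exact hf.1
  · intro f hf f' hf' hff'
    simp only [Finset.mem_filter] at hf hf'
    rw [← snoc_res f, ← snoc_res f', hff', hf.2, hf'.2]
  · intro v hv
    simp only [Vg, Finset.mem_filter, Finset.mem_univ, true_and] at hv
    refine ⟨Fin.snoc g v, Finset.mem_filter.2 ⟨hv, ?_⟩, ?_⟩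
    · funext i; simp [res, Fin.snoc_castSucc]
    · simp [Fin.snoc_last]

/-- classes with at least two extensions -/
def multi : Finset (Fin m → Fin r) := (Gres F).filter (fun g => 2 ≤ (Vg F g).card)

lemma card_F_le : F.card ≤ (Gres F).card + (r - 1) * (multi F).card := by
  rw [card_F_eq]
  calc ∑ g ∈ Gres F, (Vg F g).card
      ≤ ∑ g ∈ Gres F, (1 + (r - 1) * (if 2 ≤ (Vg F g).card then 1 else 0)) := by
        refine Finset.sum_le_sum (fun g hg => ?_)
        by_cases h2 : 2 ≤ (Vg F g).card
        · rw [if_pos h2, mul_one]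
          have : (Vg F g).card ≤ r := by
            have := Finset.card_le_univ (Vg F g)
            simpa using this
          have hr : 1 ≤ r := Nat.pos_of_ne_zero (NeZero.ne r)
          omega
        · rw [if_neg h2, mul_zero]; omega
    _ = (Gres F).card + (r - 1) * (multi F).card := by
        rw [Finset.sum_add_distrib, ← Finset.mul_sum]
        congr 1
        · simp
        · congr 1
          rw [multi, Finset.card_filter]

noncomputable def pa (g : Fin m → Fin r) : Fin r :=
  if h : (Vg F g).Nonempty then (Vg F g).min' h else 0

noncomputable def pb (g : Fin m → Fin r) : Fin r :=
  if h : ((Vg F g).erase (pa F g)).Nonempty then ((Vg F g).erase (pa F g)).min' h else 0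

lemma pa_mem {g : Fin m → Fin r} (h : 2 ≤ (Vg F g).card) : pa F g ∈ Vg F g := by
  have hne : (Vg F g).Nonempty := Finset.card_pos.1 (by omega)
  rw [pa, dif_pos hne]; exact Finset.min'_mem _ _

lemma pb_mem_erase {g : Fin m → Fin r} (h : 2 ≤ (Vg F g).card) :
    pb F g ∈ (Vg F g).erase (pa F g) := by
  have hne : ((Vg F g).erase (pa F g)).Nonempty := by
    rw [← Finset.card_pos]
    have := Finset.card_erase_of_mem (pa_mem F h)
    omega
  rw [pb, dif_pos hne]; exact Finset.min'_mem _ _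

lemma pb_mem {g : Fin m → Fin r} (h : 2 ≤ (Vg F g).card) : pb F g ∈ Vg F g :=
  Finset.mem_of_mem_erase (pb_mem_erase F h)

lemma pa_lt_pb {g : Fin m → Fin r} (h : 2 ≤ (Vg F g).card) : pa F g < pb F g := by
  have hne : (Vg F g).Nonempty := Finset.card_pos.1 (by omega)
  have := pb_mem_erase F h
  rw [pa, dif_pos hne] at this ⊢
  exact Finset.min'_lt_of_mem_erase_min' _ hne this

/-- the classes with at least two extensions, the least two of which are `ab.1 < ab.2`. -/
noncomputable def Dab (ab : Fin r × Fin r) : Finset (Fin m → Fin r) :=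
  (multi F).filter (fun g => (pa F g, pb F g) = ab)

lemma Dab_snoc {ab : Fin r × Fin r} {g : Fin m → Fin r} (hg : g ∈ Dab F ab) :
    Fin.snoc g ab.1 ∈ F ∧ Fin.snoc g ab.2 ∈ F := by
  simp only [Dab, multi, Finset.mem_filter] at hg
  obtain ⟨⟨hgG, h2⟩, hpab⟩ := hg
  have h1 := pa_mem F h2
  have h2' := pb_mem F h2
  subst hpab
  simp only [Vg, Finset.mem_filter] at h1 h2'
  exact ⟨h1.2, h2'.2⟩

lemma Dab_pair_mem {ab : Fin r × Fin r} (hne : (Dab F ab).Nonempty) : ab ∈ pairs r := by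
  obtain ⟨g, hg⟩ := hne
  simp only [Dab, multi, Finset.mem_filter] at hg
  obtain ⟨⟨hgG, h2⟩, hpab⟩ := hg
  have := pa_lt_pb F h2
  rw [pairs, Finset.mem_filter]
  refine ⟨Finset.mem_univ _, ?_⟩
  rw [← hpab]
  exact this

lemma multi_card_eq : (multi F).card = ∑ ab ∈ pairs r, (Dab F ab).card := by
  refine Finset.card_eq_sum_card_fiberwise (f := fun g => (pa F g, pb F g)) ?_
  intro g hg
  have h2 := (Finset.mem_filter.1 hg).2
  rw [pairs, Finset.mem_coe, Finset.mem_filter]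
  exact ⟨Finset.mem_univ _, pa_lt_pb F h2⟩

lemma liftable_Dab (ab : Fin r × Fin r) : Liftable F (Dab F ab) := by
  intro g hg
  exact ⟨ab.1, (Dab_snoc F hg).1⟩

/-- adding a new stage (at the new last row) to a stair of the restriction. -/
lemma stair_step {a b : Fin r} {k : ℕ} (h : Stair a b k (Gres F))
    {g : Fin m → Fin r} (hga : Fin.snoc g a ∈ F) (hgb : Fin.snoc g b ∈ F) :
    Stair a b (k + 1) F := by
  obtain ⟨j, u, v, hj, hprop⟩ := h
  refine ⟨extRows j,
    fun t => if h : (t : ℕ) < k then liftFun F (u ⟨(t : ℕ), h⟩) else Fin.snoc g a,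
    fun t => if h : (t : ℕ) < k then liftFun F (v ⟨(t : ℕ), h⟩) else Fin.snoc g b,
    extRows_strictMono hj, ?_⟩
  intro t
  by_cases ht : (t : ℕ) < k
  · obtain ⟨hu, hv, hua, hvb, hagree⟩ := hprop ⟨(t : ℕ), ht⟩
    simp only [dif_pos ht]
    rw [extRows_lt j t ht]
    refine ⟨liftFun_mem (liftable_Gres F) hu, liftFun_mem (liftable_Gres F) hv, ?_, ?_, ?_⟩
    · rw [liftFun_castSucc]; exact hua
    · rw [liftFun_castSucc]; exact hvb
    · intro x hx
      have hxm : (x : ℕ) < m := by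
        have h1 : (x : ℕ) < ((j ⟨(t : ℕ), ht⟩) : ℕ) := hx
        have h2 := (j ⟨(t : ℕ), ht⟩).isLt
        omega
      have hxeq : x = Fin.castSucc (⟨(x : ℕ), hxm⟩ : Fin m) := by apply Fin.ext; simp
      rw [hxeq, liftFun_castSucc, liftFun_castSucc]
      exact hagree _ hx
  · simp only [dif_neg ht]
    rw [extRows_last j t ht]
    refine ⟨hga, hgb, by simp [Fin.snoc_last], by simp [Fin.snoc_last], ?_⟩
    intro x hx
    have hxm : (x : ℕ) < m := hx
    have hxeq : x = Fin.castSucc (⟨(x : ℕ), hxm⟩ : Fin m) := by apply Fin.ext; simp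
    rw [hxeq, Fin.snoc_castSucc, Fin.snoc_castSucc]

end Decomp
end Sub14

namespace Sub14

variable {r : ℕ} [NeZero r]

section Potentials

noncomputable def tau (L : ℕ) (a b : Fin r) {m : ℕ} (F : Finset (Fin m → Fin r)) : ℕ :=
  Nat.findGreatest (fun k => TR k a b F) (L - 1)

noncomputable def iot (L : ℕ) (a b : Fin r) {m : ℕ} (F : Finset (Fin m → Fin r)) : ℕ :=
  Nat.findGreatest (fun k => IPR k a b F) (L - 1)

noncomputable def psi (L : ℕ) (a b : Fin r) {m : ℕ} (F : Finset (Fin m → Fin r)) : ℕ :=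
  max (max (tau L a b F) (tau L b a F)) (max (iot L a b F) (iot L b a F))

noncomputable def Psi (L : ℕ) {m : ℕ} (F : Finset (Fin m → Fin r)) : ℕ :=
  ∑ ab ∈ pairs r, psi L ab.1 ab.2 F

noncomputable def stairMax (S2 : ℕ) (a b : Fin r) {m : ℕ} (F : Finset (Fin m → Fin r)) : ℕ :=
  Nat.findGreatest (fun k => Stair a b k F) S2

noncomputable def Theta (S2 : ℕ) {m : ℕ} (F : Finset (Fin m → Fin r)) : ℕ :=
  ∑ ab ∈ pairs r, stairMax S2 ab.1 ab.2 F

variable {m : ℕ} {F : Finset (Fin (m + 1) → Fin r)}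

lemma tau_spec {L : ℕ} {a b : Fin r} {m' : ℕ} {F' : Finset (Fin m' → Fin r)}
    (h : tau L a b F' ≠ 0) : TR (tau L a b F') a b F' := fg_spec' h

lemma iot_spec {L : ℕ} {a b : Fin r} {m' : ℕ} {F' : Finset (Fin m' → Fin r)}
    (h : iot L a b F' ≠ 0) : IPR (iot L a b F') a b F' := fg_spec' h

lemma stairMax_spec {S2 : ℕ} {a b : Fin r} {m' : ℕ} {F' : Finset (Fin m' → Fin r)}
    (h : stairMax S2 a b F' ≠ 0) : Stair a b (stairMax S2 a b F') F' := fg_spec' h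

lemma tau_lift_le {L : ℕ} {a b : Fin r} {H : Finset (Fin m → Fin r)} (hLf : Liftable F H) :
    tau L a b H ≤ tau L a b F :=
  Nat.findGreatest_mono (fun _ h => h.lift hLf) le_rfl

lemma iot_lift_le {L : ℕ} {a b : Fin r} {H : Finset (Fin m → Fin r)} (hLf : Liftable F H) :
    iot L a b H ≤ iot L a b F :=
  Nat.findGreatest_mono (fun _ h => h.lift hLf) le_rfl

lemma psi_lift_le {L : ℕ} {a b : Fin r} {H : Finset (Fin m → Fin r)} (hLf : Liftable F H) :
    psi L a b H ≤ psi L a b F := by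
  unfold psi
  exact max_le_max (max_le_max (tau_lift_le hLf) (tau_lift_le hLf))
    (max_le_max (iot_lift_le hLf) (iot_lift_le hLf))

lemma Psi_lift_le {L : ℕ} {H : Finset (Fin m → Fin r)} (hLf : Liftable F H) :
    Psi L H ≤ Psi L F :=
  Finset.sum_le_sum (fun _ _ => psi_lift_le hLf)

lemma stairMax_lift_le {S2 : ℕ} {a b : Fin r} {H : Finset (Fin m → Fin r)} (hLf : Liftable F H) :
    stairMax S2 a b H ≤ stairMax S2 a b F :=
  Nat.findGreatest_mono (fun _ h => h.lift hLf) le_rfl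

lemma psi_le {L : ℕ} {a b : Fin r} {m' : ℕ} (F' : Finset (Fin m' → Fin r)) :
    psi L a b F' ≤ L - 1 := by
  unfold psi
  exact max_le (max_le (Nat.findGreatest_le _) (Nat.findGreatest_le _))
    (max_le (Nat.findGreatest_le _) (Nat.findGreatest_le _))

lemma Psi_le {L : ℕ} {m' : ℕ} (F' : Finset (Fin m' → Fin r)) :
    Psi L F' ≤ (pairs r).card * (L - 1) := by
  unfold Psi
  calc ∑ ab ∈ pairs r, psi L ab.1 ab.2 F' ≤ ∑ _ab ∈ pairs r, (L - 1) :=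
        Finset.sum_le_sum (fun ab _ => psi_le _)
    _ = (pairs r).card * (L - 1) := by rw [Finset.sum_const, smul_eq_mul]

lemma TR_one {c d : Fin r} {m' : ℕ} {F' : Finset (Fin m' → Fin r)}
    {col : Fin m' → Fin r} (hcol : col ∈ F') (row : Fin m') (hval : col row = d) :
    TR 1 c d F' := by
  refine ⟨fun _ => row, fun _ => col, ?_, ?_, fun _ => hcol, ?_⟩
  · intro p q hpq; exact absurd hpq (by omega)
  · intro p q _; exact Subsingleton.elim p q
  · intro p q
    rw [if_neg (by omega)]
    exact hval

lemma IPR_zero {a b : Fin r} {m' : ℕ} {F' : Finset (Fin m' → Fin r)}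
    (h : F'.Nonempty) : IPR 0 a b F' := by
  refine ⟨Fin.elim0, Fin.elim0, h.choose, fun p => p.elim0, fun p => p.elim0,
    fun q => q.elim0, h.choose_spec, fun q => q.elim0, fun p => p.elim0, fun p => p.elim0⟩

/-- Key potential drop: each doubled class family decreases the pair potential. -/
lemma psi_drop {L : ℕ} {a b : Fin r} (hab : a ≠ b) (hL : 2 ≤ L)
    (hF : ¬ Found L F) {H : Finset (Fin m → Fin r)} (hHne : H.Nonempty)
    (hsnoc : ∀ g ∈ H, Fin.snoc g a ∈ F ∧ Fin.snoc g b ∈ F) :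
    psi L a b H + 1 ≤ psi L a b F := by
  have hsnoc' : ∀ g ∈ H, Fin.snoc g b ∈ F ∧ Fin.snoc g a ∈ F :=
    fun g hg => ⟨(hsnoc g hg).2, (hsnoc g hg).1⟩
  have key_tau : ∀ (c d : Fin r), c ≠ d → (∀ g ∈ H, Fin.snoc g c ∈ F ∧ Fin.snoc g d ∈ F) →
      tau L c d H < psi L c d F := by
    intro c d hcd hcd_snoc
    set k := tau L c d H with hk
    have hkle : k ≤ L - 1 := Nat.findGreatest_le _
    rcases Nat.eq_zero_or_pos k with hk0 | hkpos
    · rw [hk0]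
      obtain ⟨g, hg⟩ := hHne
      have h1 : TR 1 c d F := TR_one (hcd_snoc g hg).2 (Fin.last m) (by simp [Fin.snoc_last])
      have : 1 ≤ tau L c d F := Nat.le_findGreatest (by omega) h1
      calc 0 < 1 := one_pos
        _ ≤ tau L c d F := this
        _ ≤ psi L c d F := le_max_of_le_left (le_max_left _ _)
    · have hTk : TR k c d H := by rw [hk]; exact tau_spec (by omega)
      have hext : TR (k + 1) c d F := hTk.extend hcd hcd_snoc hkpos
      by_cases hk1 : k + 1 ≤ L - 1
      · have : k + 1 ≤ tau L c d F := Nat.le_findGreatest hk1 hext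
        calc k < k + 1 := Nat.lt_succ_self _
          _ ≤ tau L c d F := this
          _ ≤ psi L c d F := le_max_of_le_left (le_max_left _ _)
      · exfalso
        have : k + 1 = L := by omega
        exact hF ⟨c, d, hcd, Or.inr (by rwa [this] at hext)⟩
  have key_iot : ∀ (c d : Fin r), c ≠ d → (∀ g ∈ H, Fin.snoc g c ∈ F ∧ Fin.snoc g d ∈ F) →
      iot L c d H < psi L c d F := by
    intro c d hcd hcd_snoc
    set k := iot L c d H with hk
    have hkle : k ≤ L - 1 := Nat.findGreatest_le _
    have hIk : IPR k c d H := by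
      rcases Nat.eq_zero_or_pos k with hk0 | hkpos
      · rw [hk0]; exact IPR_zero hHne
      · rw [hk]; exact iot_spec (by omega)
    have hext : IPR (k + 1) c d F := hIk.extend hcd hcd_snoc
    by_cases hk1 : k + 1 ≤ L - 1
    · have : k + 1 ≤ iot L c d F := Nat.le_findGreatest hk1 hext
      calc k < k + 1 := Nat.lt_succ_self _
        _ ≤ iot L c d F := this
        _ ≤ psi L c d F := le_max_of_le_right (le_max_left _ _)
    · exfalso
      have hkL : k + 1 = L := by omega
      exact hF ⟨c, d, hcd, Or.inl (by
        have := hext.toIR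
        rwa [hkL] at this)⟩
  have h1 := key_tau a b hab hsnoc
  have h2 := key_tau b a hab.symm hsnoc'
  have h3 := key_iot a b hab hsnoc
  have h4 := key_iot b a hab.symm hsnoc'
  have h2' : tau L b a H < psi L a b F := by
    apply lt_of_lt_of_le h2
    unfold psi
    rw [max_comm (tau L b a F) (tau L a b F), max_comm (iot L b a F) (iot L a b F)]
  have h4' : iot L b a H < psi L a b F := by
    apply lt_of_lt_of_le h4
    unfold psi
    rw [max_comm (tau L b a F) (tau L a b F), max_comm (iot L b a F) (iot L a b F)]
  have : psi L a b H < psi L a b F := by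
    unfold psi
    rw [max_lt_iff, max_lt_iff, max_lt_iff]
    exact ⟨⟨h1, h2'⟩, h3, h4'⟩
  omega

lemma Psi_drop {L : ℕ} {ab : Fin r × Fin r} (hmem : ab ∈ pairs r) (hL : 2 ≤ L)
    (hF : ¬ Found L F) (hne : (Dab F ab).Nonempty) :
    Psi L (Dab F ab) + 1 ≤ Psi L F := by
  have hab : ab.1 ≠ ab.2 := by
    have := (Finset.mem_filter.1 hmem).2
    exact ne_of_lt this
  have hdrop : psi L ab.1 ab.2 (Dab F ab) + 1 ≤ psi L ab.1 ab.2 F :=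
    psi_drop hab hL hF hne (fun g hg => Dab_snoc F hg)
  unfold Psi
  rw [← Finset.add_sum_erase _ _ hmem, ← Finset.add_sum_erase _ (fun ab => psi L ab.1 ab.2 F) hmem]
  have hrest : ∑ x ∈ (pairs r).erase ab, psi L x.1 x.2 (Dab F ab) ≤
      ∑ x ∈ (pairs r).erase ab, psi L x.1 x.2 F :=
    Finset.sum_le_sum (fun x _ => psi_lift_le (liftable_Dab F ab))
  omega

lemma stairMax_step {S2 : ℕ} {ab : Fin r × Fin r} (hg : (Dab F ab).Nonempty)
    (hnostair : ¬ Stair ab.1 ab.2 S2 (Gres F)) (hS2 : 1 ≤ S2) :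
    stairMax S2 ab.1 ab.2 (Gres F) + 1 ≤ stairMax S2 ab.1 ab.2 F := by
  set k := stairMax S2 ab.1 ab.2 (Gres F) with hk
  have hkle : k ≤ S2 := Nat.findGreatest_le _
  have hkS2 : k < S2 := by
    rcases Nat.lt_or_ge k S2 with h | h
    · exact h
    · exfalso
      have hkeq : k = S2 := le_antisymm hkle h
      have : Stair ab.1 ab.2 k (Gres F) := by rw [hk]; exact stairMax_spec (by omega)
      rw [hkeq] at this
      exact hnostair this
  have hstairG : Stair ab.1 ab.2 k (Gres F) := by
    rcases Nat.eq_zero_or_pos k with h0 | hpos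
    · rw [h0]; exact stair_zero _ _ _
    · rw [hk]; exact stairMax_spec (by omega)
  obtain ⟨g, hgmem⟩ := hg
  have hsnoc := Dab_snoc F hgmem
  have : Stair ab.1 ab.2 (k + 1) F := stair_step F hstairG hsnoc.1 hsnoc.2
  exact Nat.le_findGreatest (by omega) this

lemma Theta_step {S2 L : ℕ}
    (hnostair : ∀ a b : Fin r, a ≠ b → ¬ Stair a b S2 (Gres F)) (hS2 : 1 ≤ S2) :
    Theta S2 (Gres F) + ((pairs r).filter (fun ab => (Dab F ab).Nonempty)).card
      ≤ Theta S2 F := by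
  unfold Theta
  rw [Finset.card_filter, ← Finset.sum_add_distrib]
  refine Finset.sum_le_sum (fun ab hab => ?_)
  by_cases hne : (Dab F ab).Nonempty
  · rw [if_pos hne]
    have habne : ab.1 ≠ ab.2 := ne_of_lt (Finset.mem_filter.1 hab).2
    exact stairMax_step hne (hnostair _ _ habne) hS2
  · rw [if_neg hne, add_zero]
    exact stairMax_lift_le (liftable_Gres F)

lemma Theta_le {S2 : ℕ} {m' : ℕ} (F' : Finset (Fin m' → Fin r)) :
    Theta S2 F' ≤ (pairs r).card * S2 := by
  unfold Theta
  calc ∑ ab ∈ pairs r, stairMax S2 ab.1 ab.2 F' ≤ ∑ _ab ∈ pairs r, S2 :=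
        Finset.sum_le_sum (fun ab _ => Nat.findGreatest_le _)
    _ = (pairs r).card * S2 := by rw [Finset.sum_const, smul_eq_mul]

end Potentials

/-- the base of the recursion -/
def C0 (r S2 : ℕ) [NeZero r] : ℕ := 1 + (r - 1) * (pairs r).card * S2

lemma Psi_eq_zero_card {L : ℕ} (hL : 2 ≤ L) {m : ℕ} (F : Finset (Fin m → Fin r))
    (hPsi : Psi L F = 0) : F.card ≤ 1 := by
  by_contra h
  have h2 : 1 < F.card := by omega
  obtain ⟨u, hu, v, hv, huv⟩ := Finset.one_lt_card.1 h2
  obtain ⟨i, hi⟩ := Function.ne_iff.1 huv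
  have key : ∀ (c d : Fin r), c < d → TR 1 c d F → False := by
    intro c d hcd h1
    have h1' : 1 ≤ tau L c d F := Nat.le_findGreatest (by omega) h1
    have hpsi1 : 1 ≤ psi L c d F := le_trans h1' (le_max_of_le_left (le_max_left _ _))
    have hmem : (c, d) ∈ pairs r := Finset.mem_filter.2 ⟨Finset.mem_univ _, hcd⟩
    have : psi L c d F ≤ Psi L F :=
      Finset.single_le_sum (f := fun ab => psi L ab.1 ab.2 F) (fun _ _ => Nat.zero_le _) hmem
    omega
  rcases lt_or_gt_of_ne hi with h | h
  · exact key (u i) (v i) h (TR_one hv i rfl)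
  · exact key (v i) (u i) h (TR_one hu i rfl)

lemma final_bound {L S2 : ℕ} (hL : 2 ≤ L) (hS2 : 1 ≤ S2)
    (hSR : ∀ (m : ℕ) (F : Finset (Fin m → Fin r)) (a b : Fin r),
      a ≠ b → Stair a b S2 F → Found L F) :
    ∀ (s : ℕ) (m : ℕ) (F : Finset (Fin m → Fin r)), ¬ Found L F → Psi L F ≤ s →
      F.card ≤ (C0 r S2) ^ s := by
  intro s
  induction s with
  | zero =>
    intro m F hF hPsi
    have h0 : Psi L F = 0 := Nat.le_zero.mp hPsi
    have := Psi_eq_zero_card hL F h0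
    simpa using this
  | succ s IH =>
    have inner : ∀ (m : ℕ) (F : Finset (Fin m → Fin r)), ¬ Found L F → Psi L F ≤ s + 1 →
        F.card ≤ 1 + (r - 1) * (C0 r S2) ^ s * Theta S2 F := by
      intro m
      induction m with
      | zero =>
        intro F _ _
        have : F.card ≤ 1 := Finset.card_le_one.2 (fun a _ b _ => Subsingleton.elim a b)
        omega
      | succ m IHm =>
        intro F hF hPsi
        have hFG : ¬ Found L (Gres F) := fun h => hF (h.lift (liftable_Gres F))
        have hPsiG : Psi L (Gres F) ≤ s + 1 := le_trans (Psi_lift_le (liftable_Gres F)) hPsi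
        have hG := IHm (Gres F) hFG hPsiG
        have hDbound : ∀ ab ∈ pairs r, (Dab F ab).card ≤
            if (Dab F ab).Nonempty then (C0 r S2) ^ s else 0 := by
          intro ab hab
          by_cases hne : (Dab F ab).Nonempty
          · rw [if_pos hne]
            refine IH m (Dab F ab) (fun h => hF (h.lift (liftable_Dab F ab))) ?_
            have := Psi_drop hab hL hF hne
            omega
          · rw [if_neg hne]
            simp [Finset.not_nonempty_iff_eq_empty.1 hne]
        have hmulti : (multi F).card ≤
            (C0 r S2) ^ s * ((pairs r).filter (fun ab => (Dab F ab).Nonempty)).card := by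
          rw [multi_card_eq]
          calc ∑ ab ∈ pairs r, (Dab F ab).card
              ≤ ∑ ab ∈ pairs r, (if (Dab F ab).Nonempty then (C0 r S2) ^ s else 0) :=
                Finset.sum_le_sum hDbound
            _ = (C0 r S2) ^ s * ((pairs r).filter (fun ab => (Dab F ab).Nonempty)).card := by
                rw [Finset.card_filter, Finset.mul_sum]
                refine Finset.sum_congr rfl (fun ab _ => ?_)
                by_cases hne : (Dab F ab).Nonempty
                · rw [if_pos hne, if_pos hne, mul_one]
                · rw [if_neg hne, if_neg hne, mul_zero]
        have hnostair : ∀ a b : Fin r, a ≠ b → ¬ Stair a b S2 (Gres F) := by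
          intro a b hab hst
          exact hFG (hSR m (Gres F) a b hab hst)
        have htheta := Theta_step (F := F) (L := L) hnostair hS2
        calc F.card ≤ (Gres F).card + (r - 1) * (multi F).card := card_F_le F
          _ ≤ (1 + (r - 1) * (C0 r S2) ^ s * Theta S2 (Gres F)) +
              (r - 1) * ((C0 r S2) ^ s * ((pairs r).filter
                (fun ab => (Dab F ab).Nonempty)).card) :=
            Nat.add_le_add hG (Nat.mul_le_mul_left _ hmulti)
          _ = 1 + (r - 1) * (C0 r S2) ^ s * (Theta S2 (Gres F) +
              ((pairs r).filter (fun ab => (Dab F ab).Nonempty)).card) := by ring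
          _ ≤ 1 + (r - 1) * (C0 r S2) ^ s * Theta S2 F := by
            have := htheta
            exact Nat.add_le_add_left (Nat.mul_le_mul_left _ this) 1
    intro m F hF hPsi
    calc F.card ≤ 1 + (r - 1) * (C0 r S2) ^ s * Theta S2 F := inner m F hF hPsi
      _ ≤ 1 + (r - 1) * (C0 r S2) ^ s * ((pairs r).card * S2) :=
        Nat.add_le_add_left (Nat.mul_le_mul_left _ (Theta_le F)) 1
      _ ≤ (C0 r S2) ^ (s + 1) := by
        have hC1 : 1 ≤ (C0 r S2) ^ s := Nat.one_le_pow _ _ (by unfold C0; omega)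
        have : (C0 r S2) ^ (s + 1) = (C0 r S2) ^ s + ((r - 1) * (pairs r).card * S2) *
            (C0 r S2) ^ s := by
          rw [pow_succ]
          unfold C0
          ring
        rw [this]
        have h2 : (r - 1) * (C0 r S2) ^ s * ((pairs r).card * S2) =
            ((r - 1) * (pairs r).card * S2) * (C0 r S2) ^ s := by ring
        omega

/-- the unordered main theorem, modulo the stair-Ramsey input `hSR`. -/
lemma family_found {L S2 : ℕ} (hL : 2 ≤ L) (hS2 : 1 ≤ S2)
    (hSR : ∀ (m : ℕ) (F : Finset (Fin m → Fin r)) (a b : Fin r),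
      a ≠ b → Stair a b S2 F → Found L F)
    {m : ℕ} {F : Finset (Fin m → Fin r)}
    (hcard : (C0 r S2) ^ ((pairs r).card * (L - 1)) < F.card) : Found L F := by
  by_contra h
  have := final_bound hL hS2 hSR ((pairs r).card * (L - 1)) m F h (Psi_le F)
  omega

end Sub14

namespace Sub14

section Ramsey

variable {ι : Type*} [LinearOrder ι] {C : Type*} [Fintype C] [Nonempty C]

lemma ramsey_seq (κ : ι → ι → C) (hc2 : 2 ≤ Fintype.card C) :
    ∀ (M : ℕ) (S : Finset ι), 2 * (Fintype.card C) ^ M ≤ S.card →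
    ∃ (x : Fin M → ι) (h : Fin M → C), StrictMono x ∧ (∀ i, x i ∈ S) ∧
      ∀ i j : Fin M, i < j → κ (x i) (x j) = h i := by
  intro M
  induction M with
  | zero =>
    intro S _
    exact ⟨Fin.elim0, Fin.elim0, fun i => i.elim0, fun i => i.elim0, fun i => i.elim0⟩
  | succ M IH =>
    intro S hS
    set c := Fintype.card C with hc
    have hc1 : 1 ≤ c := Fintype.card_pos
    have hSne : S.Nonempty := by
      rw [← Finset.card_pos]
      have : 0 < 2 * c ^ (M + 1) := by positivity
      omega
    set x0 := S.min' hSne with hx0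
    have hx0S : x0 ∈ S := S.min'_mem hSne
    have hbig : ∃ γ : C, 2 * c ^ M ≤ ((S.erase x0).filter (fun y => κ x0 y = γ)).card := by
      by_contra hno
      push_neg at hno
      have hsum : (S.erase x0).card =
          ∑ γ ∈ Finset.univ, ((S.erase x0).filter (fun y => κ x0 y = γ)).card :=
        Finset.card_eq_sum_card_fiberwise (fun y _ => Finset.mem_univ _)
      have hle : ∑ γ ∈ (Finset.univ : Finset C),
          ((S.erase x0).filter (fun y => κ x0 y = γ)).card ≤
          ∑ _γ ∈ (Finset.univ : Finset C), (2 * c ^ M - 1) :=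
        Finset.sum_le_sum (fun γ _ => by have := hno γ; omega)
      rw [Finset.sum_const, smul_eq_mul] at hle
      have hcard : (S.erase x0).card = S.card - 1 := Finset.card_erase_of_mem hx0S
      have hcu : (Finset.univ : Finset C).card = c := Finset.card_univ
      rw [hcu] at hle
      have hpow : 2 * c ^ (M + 1) = c * (2 * c ^ M) := by ring
      have h2 : 0 < 2 * c ^ M := by positivity
      have hkey : c * (2 * c ^ M - 1) + c = c * (2 * c ^ M) := by
        have h3 : c * (2 * c ^ M - 1) + c * 1 = c * (2 * c ^ M - 1 + 1) := (mul_add _ _ _).symm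
        rw [mul_one] at h3
        rw [h3, Nat.sub_add_cancel (by omega)]
      omega
    obtain ⟨γ, hγ⟩ := hbig
    obtain ⟨x', h', hx'm, hx'S, hx'col⟩ := IH _ hγ
    have hx'mem : ∀ i, x' i ∈ S.erase x0 := fun i => Finset.mem_filter.1 (hx'S i) |>.1
    have hx0lt : ∀ i, x0 < x' i := by
      intro i
      have hmem := hx'mem i
      have hne : x' i ≠ x0 := Finset.ne_of_mem_erase hmem
      have hle : x0 ≤ x' i := S.min'_le _ (Finset.mem_of_mem_erase hmem)
      exact lt_of_le_of_ne hle (Ne.symm hne)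
    refine ⟨fun i => if h : 0 < (i : ℕ) then x' ⟨(i : ℕ) - 1, by omega⟩ else x0,
      fun i => if h : 0 < (i : ℕ) then h' ⟨(i : ℕ) - 1, by omega⟩ else γ, ?_, ?_, ?_⟩
    · intro i j hij
      have hij' : (i : ℕ) < (j : ℕ) := hij
      by_cases hi : 0 < (i : ℕ)
      · have hj : 0 < (j : ℕ) := by omega
        simp only [dif_pos hi, dif_pos hj]
        exact hx'm (by simp only [Fin.mk_lt_mk]; omega)
      · have hj : 0 < (j : ℕ) := by omega
        simp only [dif_neg hi, dif_pos hj]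
        exact hx0lt _
    · intro i
      by_cases hi : 0 < (i : ℕ)
      · simp only [dif_pos hi]
        exact Finset.mem_of_mem_erase (hx'mem _)
      · simp only [dif_neg hi]; exact hx0S
    · intro i j hij
      have hij' : (i : ℕ) < (j : ℕ) := hij
      have hj : 0 < (j : ℕ) := by omega
      by_cases hi : 0 < (i : ℕ)
      · simp only [dif_pos hi, dif_pos hj]
        exact hx'col _ _ (by simp only [Fin.mk_lt_mk]; omega)
      · simp only [dif_neg hi, dif_pos hj]
        exact (Finset.mem_filter.1 (hx'S ⟨(j : ℕ) - 1, by omega⟩)).2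

lemma ramsey (κ : ι → ι → C) (hc2 : 2 ≤ Fintype.card C) (T : ℕ) (S : Finset ι)
    (hS : 2 * (Fintype.card C) ^ ((Fintype.card C) * (T - 1) + 1) ≤ S.card) :
    ∃ g : Fin T → ι, StrictMono g ∧ (∀ i, g i ∈ S) ∧
      ∃ γ : C, ∀ s t : Fin T, s < t → κ (g s) (g t) = γ := by
  obtain ⟨x, h, hxm, hxS, hxcol⟩ := ramsey_seq κ hc2 ((Fintype.card C) * (T - 1) + 1) S hS
  have hbig : ∃ γ : C, T ≤ ((Finset.univ : Finset (Fin ((Fintype.card C) * (T - 1) + 1))).filter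
      (fun i => h i = γ)).card := by
    by_contra hno
    push_neg at hno
    have hsum : ((Finset.univ : Finset (Fin ((Fintype.card C) * (T - 1) + 1)))).card =
        ∑ γ ∈ Finset.univ, ((Finset.univ :
          Finset (Fin ((Fintype.card C) * (T - 1) + 1))).filter (fun i => h i = γ)).card :=
      Finset.card_eq_sum_card_fiberwise (fun y _ => Finset.mem_univ _)
    have hle : ∑ γ ∈ (Finset.univ : Finset C),
        ((Finset.univ : Finset (Fin ((Fintype.card C) * (T - 1) + 1))).filter
          (fun i => h i = γ)).card ≤
        ∑ _γ ∈ (Finset.univ : Finset C), (T - 1) :=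
      Finset.sum_le_sum (fun γ _ => by have := hno γ; omega)
    rw [Finset.sum_const, smul_eq_mul, Finset.card_univ] at hle
    rw [Finset.card_univ, Fintype.card_fin] at hsum
    omega
  obtain ⟨γ, hγ⟩ := hbig
  obtain ⟨t', ht'sub, ht'card⟩ := Finset.exists_subset_card_eq hγ
  refine ⟨fun i => x (t'.orderEmbOfFin ht'card i),
    fun i j hij => hxm ((t'.orderEmbOfFin ht'card).strictMono hij),
    fun i => hxS _, γ, ?_⟩
  intro s t hst
  have hmem := Finset.orderEmbOfFin_mem t' ht'card s
  have hcolor : h (t'.orderEmbOfFin ht'card s) = γ := (Finset.mem_filter.1 (ht'sub hmem)).2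
  rw [← hcolor]
  exact hxcol _ _ ((t'.orderEmbOfFin ht'card).strictMono hst)

end Ramsey
end Sub14

namespace Sub14

variable {r : ℕ} [NeZero r]

section Homog

variable {L m : ℕ} {F : Finset (Fin m → Fin r)}

private def castL (hL : 2 ≤ L) : Fin L → Fin (2 * L + 2) :=
  fun p => ⟨(p : ℕ), by omega⟩

private def shf (hL : 2 ≤ L) : Fin L → Fin (2 * L + 2) :=
  fun q => ⟨(q : ℕ) + 1, by omega⟩

private def rstag (hL : 2 ≤ L) : Fin L → Fin (2 * L + 2) :=
  fun p => ⟨2 * (p : ℕ) + 2, by omega⟩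

private def cstag (hL : 2 ≤ L) : Fin L → Fin (2 * L + 2) :=
  fun q => ⟨2 * (q : ℕ) + 3, by omega⟩

/-- generic construction: from a homogeneous block produce a realization. -/
lemma generic_real {K : ℕ} (J : Fin K → Fin m) (hJ : StrictMono J)
    (W : Fin K → (Fin m → Fin r)) (hWm : ∀ t, W t ∈ F)
    (E : Fin L → Fin L → Fin r)
    (ridx cidx : Fin L → Fin K) (hridx : StrictMono ridx)
    (hinj : ∀ q q' : Fin L, q < q' → W (cidx q) ≠ W (cidx q'))
    (hent : ∀ p q : Fin L, W (cidx q) (J (ridx p)) = E p q) :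
    ∃ (i : Fin L → Fin m) (y : Fin L → (Fin m → Fin r)),
      StrictMono i ∧ Function.Injective y ∧ (∀ q, y q ∈ F) ∧
      ∀ p q : Fin L, y q (i p) = E p q := by
  refine ⟨fun p => J (ridx p), fun q => W (cidx q), fun p q h => hJ (hridx h), ?_,
    fun q => hWm _, hent⟩
  intro q q' h
  by_contra hne
  rcases lt_or_gt_of_ne (fun he : q = q' => hne (by rw [he])) with hlt | hlt
  · exact hinj _ _ hlt h
  · exact hinj _ _ hlt h.symm

lemma homog_found_inl (hL : 2 ≤ L) {b x y : Fin r} (hxy : ¬ (x = b ∧ y = b))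
    (J : Fin (2 * L + 2) → Fin m) (hJ : StrictMono J)
    (V : Fin (2 * L + 2) → (Fin m → Fin r))
    (hVm : ∀ t, V t ∈ F) (hVd : ∀ t, V t (J t) = b)
    (hX : ∀ s t : Fin (2 * L + 2), s < t → V t (J s) = x)
    (hY : ∀ s t : Fin (2 * L + 2), s < t → V s (J t) = y) : Found L F := by
  have hcast : StrictMono (castL hL) := by
    intro p q h; simp only [castL, Fin.mk_lt_mk]; exact h
  have hshf : StrictMono (shf hL) := by
    intro p q h
    have : (p : ℕ) < (q : ℕ) := h
    simp only [shf, Fin.mk_lt_mk]; omega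
  have hcstag : StrictMono (cstag hL) := by
    intro p q h
    have : (p : ℕ) < (q : ℕ) := h
    simp only [cstag, Fin.mk_lt_mk]; omega
  have hrstag : StrictMono (rstag hL) := by
    intro p q h
    have : (p : ℕ) < (q : ℕ) := h
    simp only [rstag, Fin.mk_lt_mk]; omega
  -- injectivity helper when x ≠ b
  have hinjV : x ≠ b → ∀ (cf : Fin L → Fin (2 * L + 2)), StrictMono cf →
      ∀ q q' : Fin L, q < q' → V (cf q) ≠ V (cf q') := by
    intro hxb cf hcf q q' hlt he
    apply hxb
    calc x = V (cf q') (J (cf q)) := (hX _ _ (hcf hlt)).symm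
      _ = V (cf q) (J (cf q)) := (congrFun he (J (cf q))).symm
      _ = b := hVd _
  by_cases hxyeq : x = y
  · -- I_L(b, x)
    have hxb : x ≠ b := fun h => hxy ⟨h, hxyeq ▸ h⟩
    refine ⟨b, x, Ne.symm hxb, Or.inl ?_⟩
    refine generic_real J hJ V hVm _ (castL hL) (castL hL) hcast
      (hinjV hxb _ hcast) ?_
    intro p q
    rcases lt_trichotomy p q with h | h | h
    · rw [hX _ _ (hcast h), if_neg (ne_of_lt h)]
    · rw [h, hVd, if_pos rfl]
    · rw [hY _ _ (hcast h), if_neg (ne_of_gt h), hxyeq]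
  by_cases hyb : y = b
  · -- T_L(b, x) via column shift
    have hxb : x ≠ b := fun h => hxy ⟨h, hyb⟩
    refine ⟨b, x, Ne.symm hxb, Or.inr ?_⟩
    refine generic_real J hJ V hVm _ (castL hL) (shf hL) hcast
      (hinjV hxb _ hshf) ?_
    intro p q
    rcases lt_trichotomy ((p : ℕ)) ((q : ℕ) + 1) with h | h | h
    · have hlt : castL hL p < shf hL q := by simp only [castL, shf, Fin.mk_lt_mk]; omega
      rw [hX _ _ hlt, if_neg (by omega)]
    · have heq : castL hL p = shf hL q := Fin.ext (by simpa [castL, shf] using h)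
      rw [heq, hVd, if_pos (by omega)]
    · have hlt : shf hL q < castL hL p := by simp only [castL, shf, Fin.mk_lt_mk]; omega
      rw [hY _ _ hlt, hyb, if_pos (by omega)]
  by_cases hxb : x = b
  · -- T_L(y, b) directly
    refine ⟨y, b, hyb, Or.inr ?_⟩
    have hinj2 : ∀ q q' : Fin L, q < q' → V (castL hL q) ≠ V (castL hL q') := by
      intro q q' hlt he
      apply hyb
      calc y = V (castL hL q) (J (castL hL q')) := (hY _ _ (hcast hlt)).symm
        _ = V (castL hL q') (J (castL hL q')) := congrFun he (J (castL hL q'))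
        _ = b := hVd _
    refine generic_real J hJ V hVm _ (castL hL) (castL hL) hcast hinj2 ?_
    intro p q
    rcases lt_trichotomy p q with h | h | h
    · have : (p : ℕ) < (q : ℕ) := h
      rw [hX _ _ (hcast h), hxb, if_neg (by omega)]
    · rw [h, hVd, if_neg (by omega)]
    · have : (q : ℕ) < (p : ℕ) := h
      rw [hY _ _ (hcast h), if_pos this]
  · -- x ≠ y, x ≠ b, y ≠ b : T_L(y, x) via staggering
    refine ⟨y, x, fun h => hxyeq h.symm, Or.inr ?_⟩
    refine generic_real J hJ V hVm _ (rstag hL) (cstag hL) hrstag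
      (hinjV hxb _ hcstag) ?_
    intro p q
    by_cases h : (q : ℕ) < (p : ℕ)
    · have hlt : cstag hL q < rstag hL p := by simp only [cstag, rstag, Fin.mk_lt_mk]; omega
      rw [hY _ _ hlt, if_pos h]
    · have hlt : rstag hL p < cstag hL q := by simp only [cstag, rstag, Fin.mk_lt_mk]; omega
      rw [hX _ _ hlt, if_neg h]

lemma homog_found_inr (hL : 2 ≤ L) {a b w : Fin r} (hab : a ≠ b)
    (J : Fin (2 * L + 2) → Fin m) (hJ : StrictMono J)
    (U : Fin (2 * L + 2) → (Fin m → Fin r))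
    (hUm : ∀ t, U t ∈ F) (hUd : ∀ t, U t (J t) = a)
    (hXb : ∀ s t : Fin (2 * L + 2), s < t → U t (J s) = b)
    (hW : ∀ s t : Fin (2 * L + 2), s < t → U s (J t) = w) : Found L F := by
  have hcast : StrictMono (castL hL) := by
    intro p q h; simp only [castL, Fin.mk_lt_mk]; exact h
  have hshf : StrictMono (shf hL) := by
    intro p q h
    have : (p : ℕ) < (q : ℕ) := h
    simp only [shf, Fin.mk_lt_mk]; omega
  have hcstag : StrictMono (cstag hL) := by
    intro p q h
    have : (p : ℕ) < (q : ℕ) := h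
    simp only [cstag, Fin.mk_lt_mk]; omega
  have hrstag : StrictMono (rstag hL) := by
    intro p q h
    have : (p : ℕ) < (q : ℕ) := h
    simp only [rstag, Fin.mk_lt_mk]; omega
  have hinjU : ∀ (cf : Fin L → Fin (2 * L + 2)), StrictMono cf →
      ∀ q q' : Fin L, q < q' → U (cf q) ≠ U (cf q') := by
    intro cf hcf q q' hlt he
    apply hab
    calc a = U (cf q) (J (cf q)) := (hUd _).symm
      _ = U (cf q') (J (cf q)) := congrFun he (J (cf q))
      _ = b := hXb _ _ (hcf hlt)
  by_cases hwb : w = b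
  · -- I_L(a, b)
    refine ⟨a, b, hab, Or.inl ?_⟩
    refine generic_real J hJ U hUm _ (castL hL) (castL hL) hcast (hinjU _ hcast) ?_
    intro p q
    rcases lt_trichotomy p q with h | h | h
    · rw [hXb _ _ (hcast h), if_neg (ne_of_lt h)]
    · rw [h, hUd, if_pos rfl]
    · rw [hW _ _ (hcast h), hwb, if_neg (ne_of_gt h)]
  by_cases hwa : w = a
  · -- T_L(a, b) via column shift
    refine ⟨a, b, hab, Or.inr ?_⟩
    refine generic_real J hJ U hUm _ (castL hL) (shf hL) hcast (hinjU _ hshf) ?_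
    intro p q
    rcases lt_trichotomy ((p : ℕ)) ((q : ℕ) + 1) with h | h | h
    · have hlt : castL hL p < shf hL q := by simp only [castL, shf, Fin.mk_lt_mk]; omega
      rw [hXb _ _ hlt, if_neg (by omega)]
    · have heq : castL hL p = shf hL q := Fin.ext (by simpa [castL, shf] using h)
      rw [heq, hUd, if_pos (by omega)]
    · have hlt : shf hL q < castL hL p := by simp only [castL, shf, Fin.mk_lt_mk]; omega
      rw [hW _ _ hlt, hwa, if_pos (by omega)]
  · -- T_L(w, b) via staggering
    refine ⟨w, b, hwb, Or.inr ?_⟩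
    refine generic_real J hJ U hUm _ (rstag hL) (cstag hL) hrstag (hinjU _ hcstag) ?_
    intro p q
    by_cases h : (q : ℕ) < (p : ℕ)
    · have hlt : cstag hL q < rstag hL p := by simp only [cstag, rstag, Fin.mk_lt_mk]; omega
      rw [hW _ _ hlt, if_pos h]
    · have hlt : rstag hL p < cstag hL q := by simp only [cstag, rstag, Fin.mk_lt_mk]; omega
      rw [hXb _ _ hlt, if_neg h]

end Homog
end Sub14

namespace Sub14

variable {r : ℕ} [NeZero r]

section StairFound

/-- the colour used in the stair Ramsey argument -/
noncomputable def stairColor (b : Fin r) {m K : ℕ} (j : Fin K → Fin m)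
    (u v : Fin K → (Fin m → Fin r)) (s t : Fin K) :
    {xy : Fin r × Fin r // xy ≠ (b, b)} ⊕ Fin r :=
  if hxy : (v t (j s), v s (j t)) = (b, b) then Sum.inr (u s (j t))
  else Sum.inl ⟨(v t (j s), v s (j t)), hxy⟩

lemma card_gamma (b : Fin r) :
    Fintype.card ({xy : Fin r × Fin r // xy ≠ (b, b)} ⊕ Fin r) = r * r - 1 + r := by
  rw [Fintype.card_sum, Fintype.card_fin]
  congr 1
  have h2 := Fintype.card_subtype_compl (fun xy : Fin r × Fin r => xy = (b, b))
  rw [Fintype.card_subtype_eq, Fintype.card_prod, Fintype.card_fin] at h2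
  exact h2

lemma stair_found {L : ℕ} (hL : 2 ≤ L) {m : ℕ} {F : Finset (Fin m → Fin r)}
    {a b : Fin r} (hab : a ≠ b)
    (hst : Stair a b (2 * (r * r - 1 + r) ^ ((r * r - 1 + r) * (2 * L + 1) + 1)) F) :
    Found L F := by
  have hr2 : 2 ≤ r := by
    by_contra h
    have hr1 : r = 1 := by
      have := Nat.pos_of_ne_zero (NeZero.ne r); omega
    exact hab (by
      subst hr1
      exact Subsingleton.elim a b)
  obtain ⟨j, u, v, hj, hprop⟩ := hst
  have hcard : Fintype.card ({xy : Fin r × Fin r // xy ≠ (b, b)} ⊕ Fin r) = r * r - 1 + r :=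
    card_gamma b
  have hc2 : 2 ≤ Fintype.card ({xy : Fin r × Fin r // xy ≠ (b, b)} ⊕ Fin r) := by
    rw [hcard]
    have : 4 ≤ r * r := Nat.mul_le_mul hr2 hr2
    omega
  have hbound : 2 * (Fintype.card ({xy : Fin r × Fin r // xy ≠ (b, b)} ⊕ Fin r)) ^
      ((Fintype.card ({xy : Fin r × Fin r // xy ≠ (b, b)} ⊕ Fin r)) * ((2 * L + 2) - 1) + 1) ≤
      (Finset.univ : Finset (Fin (2 * (r * r - 1 + r) ^
        ((r * r - 1 + r) * (2 * L + 1) + 1)))).card := by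
    rw [hcard, Finset.card_univ, Fintype.card_fin]
    have : (2 * L + 2) - 1 = 2 * L + 1 := by omega
    rw [this]
  obtain ⟨g, hg, _, γ, hcol⟩ := ramsey (stairColor b j u v) hc2 (2 * L + 2)
    Finset.univ hbound
  have hJ : StrictMono (fun t : Fin (2 * L + 2) => j (g t)) := fun s t h => hj (hg h)
  rcases γ with ⟨⟨x, y⟩, hxy⟩ | w
  · -- inl case
    have hfacts : ∀ s t : Fin (2 * L + 2), s < t →
        v (g t) (j (g s)) = x ∧ v (g s) (j (g t)) = y := by
      intro s t hst
      have h := hcol s t hst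
      unfold stairColor at h
      split_ifs at h with hbb
      all_goals first
        | exact Sum.noConfusion h
        | (simp only [Sum.inl.injEq, Subtype.mk.injEq, Prod.mk.injEq] at h; exact h)
    refine homog_found_inl hL (b := b) (x := x) (y := y) ?_
      (fun t => j (g t)) hJ (fun t => v (g t))
      (fun t => (hprop (g t)).2.1) (fun t => (hprop (g t)).2.2.2.1)
      (fun s t h => (hfacts s t h).1) (fun s t h => (hfacts s t h).2)
    intro ⟨hx, hy⟩
    exact hxy (by rw [hx, hy])
  · -- inr case
    have hfacts : ∀ s t : Fin (2 * L + 2), s < t →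
        v (g t) (j (g s)) = b ∧ v (g s) (j (g t)) = b ∧ u (g s) (j (g t)) = w := by
      intro s t hst
      have h := hcol s t hst
      unfold stairColor at h
      split_ifs at h with hbb
      all_goals first
        | exact Sum.noConfusion h
        | (simp only [Sum.inr.injEq] at h
           exact ⟨congrArg Prod.fst hbb, congrArg Prod.snd hbb, h⟩)
    refine homog_found_inr hL (w := w) hab (fun t => j (g t)) hJ (fun t => u (g t))
      (fun t => (hprop (g t)).1) (fun t => (hprop (g t)).2.2.1) ?_ ?_
    · -- hXb : U t (J s) = b for s < t, via agreement with v
      intro s t h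
      show u (g t) (j (g s)) = b
      have hagree := (hprop (g t)).2.2.2.2 (j (g s)) (hj (hg h))
      rw [hagree]
      exact (hfacts s t h).1
    · intro s t h
      show u (g s) (j (g t)) = w
      exact (hfacts s t h).2.2

end StairFound
end Sub14

namespace Sub14

section ES

noncomputable def upL (f : ℕ → ℕ) : ℕ → ℕ
  | n => (((Finset.range n).filter (fun m => f m < f n)).attach.sup
      (fun m => upL f m.1)) + 1
  termination_by n => n
  decreasing_by
    have h := m.2
    simp only [Finset.mem_filter, Finset.mem_range] at h
    omega

noncomputable def dnL (f : ℕ → ℕ) : ℕ → ℕ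
  | n => (((Finset.range n).filter (fun m => f n < f m)).attach.sup
      (fun m => dnL f m.1)) + 1
  termination_by n => n
  decreasing_by
    have h := m.2
    simp only [Finset.mem_filter, Finset.mem_range] at h
    omega

lemma upL_def (f : ℕ → ℕ) (n : ℕ) : upL f n =
    (((Finset.range n).filter (fun m => f m < f n)).attach.sup
      (fun m => upL f m.1)) + 1 := by rw [upL]

lemma dnL_def (f : ℕ → ℕ) (n : ℕ) : dnL f n =
    (((Finset.range n).filter (fun m => f n < f m)).attach.sup
      (fun m => dnL f m.1)) + 1 := by rw [dnL]

lemma upL_pos (f : ℕ → ℕ) (n : ℕ) : 1 ≤ upL f n := by rw [upL_def]; omega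

lemma dnL_pos (f : ℕ → ℕ) (n : ℕ) : 1 ≤ dnL f n := by rw [dnL_def]; omega

lemma upL_strict (f : ℕ → ℕ) {m n : ℕ} (hmn : m < n) (hf : f m < f n) :
    upL f m < upL f n := by
  conv_rhs => rw [upL_def]
  have hmem : m ∈ (Finset.range n).filter (fun m => f m < f n) :=
    Finset.mem_filter.2 ⟨Finset.mem_range.2 hmn, hf⟩
  have h2 : upL f m ≤ ((Finset.range n).filter (fun m => f m < f n)).attach.sup
      (fun m_ => upL f m_.1) :=
    Finset.le_sup (f := fun m_ => upL f m_.1) (Finset.mem_attach _ ⟨m, hmem⟩)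
  omega

lemma dnL_strict (f : ℕ → ℕ) {m n : ℕ} (hmn : m < n) (hf : f n < f m) :
    dnL f m < dnL f n := by
  conv_rhs => rw [dnL_def]
  have hmem : m ∈ (Finset.range n).filter (fun m => f n < f m) :=
    Finset.mem_filter.2 ⟨Finset.mem_range.2 hmn, hf⟩
  have h2 : dnL f m ≤ ((Finset.range n).filter (fun m => f n < f m)).attach.sup
      (fun m_ => dnL f m_.1) :=
    Finset.le_sup (f := fun m_ => dnL f m_.1) (Finset.mem_attach _ ⟨m, hmem⟩)
  omega

lemma upL_chain (f : ℕ → ℕ) : ∀ n k, k = upL f n →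
    ∃ g : Fin k → ℕ, StrictMono g ∧ StrictMono (fun i => f (g i)) ∧
      (∀ i, g i ≤ n) ∧ (∀ hk : 0 < k, g ⟨k - 1, by omega⟩ = n) := by
  intro n
  induction n using Nat.strong_induction_on with
  | _ n IH =>
    intro k hk
    rw [upL_def] at hk
    set s := (Finset.range n).filter (fun m => f m < f n) with hs
    set B := s.attach.sup (fun m => upL f m.1) with hB
    rcases Nat.eq_zero_or_pos B with hB0 | hBpos
    · -- k = 1
      rw [hB0] at hk
      subst hk
      refine ⟨fun _ => n, ?_, ?_, fun _ => le_refl _, fun _ => rfl⟩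
      · intro p q hpq; exact absurd hpq (by omega)
      · intro p q hpq; exact absurd hpq (by omega)
    · -- B > 0, split off the maximiser
      have hsne : s.attach.Nonempty := by
        by_contra hemp
        rw [Finset.not_nonempty_iff_eq_empty] at hemp
        rw [hemp] at hB
        simp at hB
        omega
      obtain ⟨⟨m0, hm0⟩, _, hsup⟩ := Finset.exists_mem_eq_sup s.attach hsne
        (fun m => upL f m.1)
      have hm0' := Finset.mem_filter.1 hm0
      have hm0n : m0 < n := Finset.mem_range.1 hm0'.1
      have hfm0 : f m0 < f n := hm0'.2
      have hBm0 : B = upL f m0 := hsup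
      obtain ⟨g', hg'm, hg'f, hg'le, hg'last⟩ := IH m0 hm0n B hBm0
      subst hk
      refine ⟨fun i => if h : (i : ℕ) < B then g' ⟨(i : ℕ), h⟩ else n, ?_, ?_, ?_, ?_⟩
      · intro p q hpq
        have hpq' : (p : ℕ) < (q : ℕ) := hpq
        by_cases hp : (p : ℕ) < B <;> by_cases hq : (q : ℕ) < B
        · simp only [dif_pos hp, dif_pos hq]
          exact hg'm (by simp only [Fin.mk_lt_mk]; omega)
        · simp only [dif_pos hp, dif_neg hq]
          exact lt_of_le_of_lt (hg'le _) hm0n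
        · exact absurd hpq' (by omega)
        · exact absurd hpq' (by omega)
      · intro p q hpq
        have hpq' : (p : ℕ) < (q : ℕ) := hpq
        by_cases hp : (p : ℕ) < B <;> by_cases hq : (q : ℕ) < B
        · simp only [dif_pos hp, dif_pos hq]
          exact hg'f (by simp only [Fin.mk_lt_mk]; omega)
        · simp only [dif_pos hp, dif_neg hq]
          have hle : f (g' ⟨(p : ℕ), hp⟩) ≤ f (g' ⟨B - 1, by omega⟩) := by
            rcases Nat.lt_or_ge ((p : ℕ)) (B - 1) with h | h
            · exact le_of_lt (hg'f (by simp only [Fin.mk_lt_mk]; omega))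
            · have : ((⟨(p : ℕ), hp⟩ : Fin B)) = ⟨B - 1, by omega⟩ := by
                apply Fin.ext; simp; omega
              rw [this]
          rw [hg'last hBpos] at hle
          omega
        · exact absurd hpq' (by omega)
        · exact absurd hpq' (by omega)
      · intro i
        by_cases hi : (i : ℕ) < B
        · simp only [dif_pos hi]
          exact le_trans (hg'le _) (le_of_lt hm0n)
        · simp only [dif_neg hi]
          exact le_refl n
      · intro _
        have : ¬ (B + 1 - 1 < B) := by omega
        simp only [dif_neg this]

lemma dnL_chain (f : ℕ → ℕ) : ∀ n k, k = dnL f n →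
    ∃ g : Fin k → ℕ, StrictMono g ∧ StrictAnti (fun i => f (g i)) ∧
      (∀ i, g i ≤ n) ∧ (∀ hk : 0 < k, g ⟨k - 1, by omega⟩ = n) := by
  intro n
  induction n using Nat.strong_induction_on with
  | _ n IH =>
    intro k hk
    rw [dnL_def] at hk
    set s := (Finset.range n).filter (fun m => f n < f m) with hs
    set B := s.attach.sup (fun m => dnL f m.1) with hB
    rcases Nat.eq_zero_or_pos B with hB0 | hBpos
    · rw [hB0] at hk
      subst hk
      refine ⟨fun _ => n, ?_, ?_, fun _ => le_refl _, fun _ => rfl⟩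
      · intro p q hpq; exact absurd hpq (by omega)
      · intro p q hpq; exact absurd hpq (by omega)
    · have hsne : s.attach.Nonempty := by
        by_contra hemp
        rw [Finset.not_nonempty_iff_eq_empty] at hemp
        rw [hemp] at hB
        simp at hB
        omega
      obtain ⟨⟨m0, hm0⟩, _, hsup⟩ := Finset.exists_mem_eq_sup s.attach hsne
        (fun m => dnL f m.1)
      have hm0' := Finset.mem_filter.1 hm0
      have hm0n : m0 < n := Finset.mem_range.1 hm0'.1
      have hfm0 : f n < f m0 := hm0'.2
      have hBm0 : B = dnL f m0 := hsup
      obtain ⟨g', hg'm, hg'f, hg'le, hg'last⟩ := IH m0 hm0n B hBm0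
      subst hk
      refine ⟨fun i => if h : (i : ℕ) < B then g' ⟨(i : ℕ), h⟩ else n, ?_, ?_, ?_, ?_⟩
      · intro p q hpq
        have hpq' : (p : ℕ) < (q : ℕ) := hpq
        by_cases hp : (p : ℕ) < B <;> by_cases hq : (q : ℕ) < B
        · simp only [dif_pos hp, dif_pos hq]
          exact hg'm (by simp only [Fin.mk_lt_mk]; omega)
        · simp only [dif_pos hp, dif_neg hq]
          exact lt_of_le_of_lt (hg'le _) hm0n
        · exact absurd hpq' (by omega)
        · exact absurd hpq' (by omega)
      · intro p q hpq
        have hpq' : (p : ℕ) < (q : ℕ) := hpq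
        by_cases hp : (p : ℕ) < B <;> by_cases hq : (q : ℕ) < B
        · simp only [dif_pos hp, dif_pos hq]
          exact hg'f (by simp only [Fin.mk_lt_mk]; omega)
        · simp only [dif_pos hp, dif_neg hq]
          have hle : f (g' ⟨B - 1, by omega⟩) ≤ f (g' ⟨(p : ℕ), hp⟩) := by
            rcases Nat.lt_or_ge ((p : ℕ)) (B - 1) with h | h
            · exact le_of_lt (hg'f (by simp only [Fin.mk_lt_mk]; omega))
            · have : ((⟨(p : ℕ), hp⟩ : Fin B)) = ⟨B - 1, by omega⟩ := by
                apply Fin.ext; simp; omega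
              rw [this]
          rw [hg'last hBpos] at hle
          omega
        · exact absurd hpq' (by omega)
        · exact absurd hpq' (by omega)
      · intro i
        by_cases hi : (i : ℕ) < B
        · simp only [dif_pos hi]
          exact le_trans (hg'le _) (le_of_lt hm0n)
        · simp only [dif_neg hi]
          exact le_refl n
      · intro _
        have : ¬ (B + 1 - 1 < B) := by omega
        simp only [dif_neg this]

lemma erdos_szekeres {l N : ℕ} (hl : 1 ≤ l) (hN : (l - 1) * (l - 1) + 1 ≤ N) (f : ℕ → ℕ)
    (hinj : ∀ i j, i < N → j < N → i ≠ j → f i ≠ f j) :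
    ∃ g : Fin l → ℕ, StrictMono g ∧ (∀ i, g i < N) ∧
      (StrictMono (fun i => f (g i)) ∨ StrictAnti (fun i => f (g i))) := by
  by_cases hup : ∃ n, n < N ∧ l ≤ upL f n
  · obtain ⟨n, hnN, hn⟩ := hup
    obtain ⟨g, hgm, hgf, hgle, _⟩ := upL_chain f n (upL f n) rfl
    have hcast : ∀ i : Fin l, ((Fin.castLE hn i : Fin (upL f n))) = (⟨(i : ℕ), by omega⟩ :
      Fin (upL f n)) := fun i => rfl
    refine ⟨fun i => g (Fin.castLE hn i), ?_, ?_, Or.inl ?_⟩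
    · intro p q hpq
      exact hgm hpq
    · intro i; exact lt_of_le_of_lt (hgle _) hnN
    · intro p q hpq
      exact hgf hpq
  by_cases hdn : ∃ n, n < N ∧ l ≤ dnL f n
  · obtain ⟨n, hnN, hn⟩ := hdn
    obtain ⟨g, hgm, hgf, hgle, _⟩ := dnL_chain f n (dnL f n) rfl
    refine ⟨fun i => g (Fin.castLE hn i), ?_, ?_, Or.inr ?_⟩
    · intro p q hpq
      exact hgm hpq
    · intro i; exact lt_of_le_of_lt (hgle _) hnN
    · intro p q hpq
      exact hgf hpq
  · exfalso
    push_neg at hup hdn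
    have hup' : ∀ n, n < N → upL f n ≤ l - 1 := by
      intro n hn; have := hup n hn; omega
    have hdn' : ∀ n, n < N → dnL f n ≤ l - 1 := by
      intro n hn; have := hdn n hn; omega
    have hl1 : 1 ≤ l - 1 := by
      have h0 : (0 : ℕ) < N := by omega
      have := upL_pos f 0
      have := hup' 0 h0
      omega
    set φ : Fin N → Fin (l - 1) × Fin (l - 1) := fun n =>
      (⟨upL f (n : ℕ) - 1, by
        have := hup' (n : ℕ) n.isLt
        have := upL_pos f (n : ℕ)
        omega⟩,
       ⟨dnL f (n : ℕ) - 1, by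
        have := hdn' (n : ℕ) n.isLt
        have := dnL_pos f (n : ℕ)
        omega⟩) with hφ
    have hφinj : Function.Injective φ := by
      intro p q hpq
      by_contra hne
      have hne' : (p : ℕ) ≠ (q : ℕ) := fun h => hne (Fin.ext h)
      have h1 := congrArg (fun z => (z.1 : ℕ)) hpq
      have h2 := congrArg (fun z => (z.2 : ℕ)) hpq
      simp only [hφ] at h1 h2
      have hup1 := upL_pos f (p : ℕ)
      have hup2 := upL_pos f (q : ℕ)
      have hdn1 := dnL_pos f (p : ℕ)
      have hdn2 := dnL_pos f (q : ℕ)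
      rcases Nat.lt_or_ge (p : ℕ) (q : ℕ) with h | h
      · have hfne := hinj _ _ p.isLt q.isLt hne'
        rcases Nat.lt_or_ge (f (p : ℕ)) (f (q : ℕ)) with hf | hf
        · have := upL_strict f h hf; omega
        · have hf' : f (q : ℕ) < f (p : ℕ) := by omega
          have := dnL_strict f h hf'; omega
      · have h' : (q : ℕ) < (p : ℕ) := by omega
        have hfne := hinj _ _ q.isLt p.isLt (Ne.symm hne')
        rcases Nat.lt_or_ge (f (q : ℕ)) (f (p : ℕ)) with hf | hf
        · have := upL_strict f h' hf; omega
        · have hf' : f (p : ℕ) < f (q : ℕ) := by omega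
          have := dnL_strict f h' hf'; omega
    have hcard := Fintype.card_le_of_injective φ hφinj
    simp only [Fintype.card_fin, Fintype.card_prod] at hcard
    omega

end ES
end Sub14

namespace Sub14

variable {r : ℕ} [NeZero r]

section Arith

lemma pairs_card_le_sq : (pairs r).card ≤ r * r := by
  calc (pairs r).card ≤ (Finset.univ : Finset (Fin r × Fin r)).card :=
        Finset.card_filter_le _ _
    _ = r * r := by simp

lemma pairs_card_le_choose : (pairs r).card ≤ r.choose 2 := by
  have hmaps : ∀ ab ∈ pairs r, ({ab.1, ab.2} : Finset (Fin r)) ∈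
      (Finset.univ : Finset (Fin r)).powersetCard 2 := by
    intro ab hab
    have hlt : ab.1 < ab.2 := (Finset.mem_filter.1 hab).2
    rw [Finset.mem_powersetCard]
    refine ⟨Finset.subset_univ _, ?_⟩
    rw [Finset.card_insert_of_notMem (by simp [ne_of_lt hlt]), Finset.card_singleton]
  have hinj : ∀ ab ∈ pairs r, ∀ cd ∈ pairs r,
      ({ab.1, ab.2} : Finset (Fin r)) = ({cd.1, cd.2} : Finset (Fin r)) → ab = cd := by
    intro ab hab cd hcd heq
    have h1 : ab.1 < ab.2 := (Finset.mem_filter.1 hab).2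
    have h2 : cd.1 < cd.2 := (Finset.mem_filter.1 hcd).2
    have ha : ab.1 ∈ ({cd.1, cd.2} : Finset (Fin r)) := by
      rw [← heq]; simp
    have hb : ab.2 ∈ ({cd.1, cd.2} : Finset (Fin r)) := by
      rw [← heq]; simp
    have hc : cd.1 ∈ ({ab.1, ab.2} : Finset (Fin r)) := by
      rw [heq]; simp
    simp only [Finset.mem_insert, Finset.mem_singleton] at ha hb hc
    have : ab.1 = cd.1 ∧ ab.2 = cd.2 := by
      rcases ha with ha | ha <;> rcases hb with hb | hb <;>
        first
          | (exact ⟨ha, hb⟩)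
          | (exfalso
             rcases hc with hc | hc <;>
             · rw [Fin.lt_def] at h1 h2
               have e1 := congrArg Fin.val ha
               have e2 := congrArg Fin.val hb
               have e3 := congrArg Fin.val hc
               omega)
    exact Prod.ext this.1 this.2
  calc (pairs r).card ≤ ((Finset.univ : Finset (Fin r)).powersetCard 2).card :=
        Finset.card_le_card_of_injOn _ hmaps hinj
    _ = r.choose 2 := by rw [Finset.card_powersetCard, Finset.card_univ, Fintype.card_fin]

lemma two_mul_choose_two (hr : 1 ≤ r) : 2 * r.choose 2 = r * (r - 1) := by
  have h := Nat.choose_two_right r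
  have heven : 2 ∣ r * (r - 1) := by
    rcases Nat.even_or_odd r with he | ho
    · exact Dvd.dvd.mul_right he.two_dvd _
    · have : Even (r - 1) := by
        rcases ho with ⟨k, hk⟩
        exact ⟨k, by omega⟩
      exact Dvd.dvd.mul_left this.two_dvd _
  rw [h, Nat.mul_div_cancel' heven]

lemma c_cubed_le (hr : 2 ≤ r) : (r * r - 1 + r) ^ 3 ≤ r ^ 7 := by
  rcases eq_or_lt_of_le hr with h2 | h3
  · subst h2; norm_num
  · have hr3 : 3 ≤ r := h3
    have h9 : 9 ≤ r * r := Nat.mul_le_mul hr3 hr3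
    have h3r : 3 * r ≤ r * r := Nat.mul_le_mul_right _ hr3
    have hkey : 3 * (r * r - 1 + r) ≤ 4 * (r * r) := by omega
    have hcube : (3 * (r * r - 1 + r)) ^ 3 ≤ (4 * (r * r)) ^ 3 :=
      Nat.pow_le_pow_left hkey 3
    have h1 : (3 : ℕ) ^ 3 * (r * r - 1 + r) ^ 3 ≤ 4 ^ 3 * (r * r) ^ 3 := by
      calc (3 : ℕ) ^ 3 * (r * r - 1 + r) ^ 3 = (3 * (r * r - 1 + r)) ^ 3 := by ring
        _ ≤ (4 * (r * r)) ^ 3 := hcube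
        _ = 4 ^ 3 * (r * r) ^ 3 := by ring
    have h2 : (4 : ℕ) ^ 3 * (r * r) ^ 3 ≤ 27 * r ^ 7 := by
      have : (r * r) ^ 3 = r ^ 6 := by ring
      rw [this]
      have h64 : (64 : ℕ) ≤ 27 * r := by omega
      calc (4 : ℕ) ^ 3 * r ^ 6 = 64 * r ^ 6 := by norm_num
        _ ≤ 27 * r * r ^ 6 := Nat.mul_le_mul_right _ h64
        _ = 27 * r ^ 7 := by ring
    have : 27 * (r * r - 1 + r) ^ 3 ≤ 27 * r ^ 7 := by
      calc 27 * (r * r - 1 + r) ^ 3 = 3 ^ 3 * (r * r - 1 + r) ^ 3 := by norm_num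
        _ ≤ 4 ^ 3 * (r * r) ^ 3 := h1
        _ ≤ 27 * r ^ 7 := h2
    omega

/-- the final quantitative comparison -/
lemma threshold_le_gen (ℓ L c E : ℕ) (hr : 2 ≤ r) (hℓ : 2 ≤ ℓ)
    (hLdef : L = (ℓ - 1) * (ℓ - 1) + 1) (hcdef : c = r * r - 1 + r)
    (hEdef : E = c * (2 * L + 1) + 1) :
    (C0 r (2 * c ^ E)) ^ ((pairs r).card * (L - 1)) ≤
    r ^ (30 * (r.choose 2) ^ 2 * ℓ ^ 4) := by
  have hrr : 4 ≤ r * r := Nat.mul_le_mul hr hr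
  have hc2 : 5 ≤ c := by omega
  have hX1 : 1 ≤ c ^ E := Nat.one_le_pow _ _ (by omega)
  -- step 1 : C0 ≤ r^5 * c^E
  have hC0 : C0 r (2 * c ^ E) ≤ r ^ 5 * c ^ E := by
    have hA : (r - 1) * (pairs r).card * (2 * c ^ E) ≤ 2 * (r ^ 3 * c ^ E) := by
      calc (r - 1) * (pairs r).card * (2 * c ^ E) ≤ r * (r * r) * (2 * c ^ E) :=
            Nat.mul_le_mul (Nat.mul_le_mul (by omega) pairs_card_le_sq) le_rfl
        _ = 2 * (r ^ 3 * c ^ E) := by ring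
    have h1 : 1 ≤ r ^ 3 * c ^ E := by
      have h2 : 1 ≤ r ^ 3 := Nat.one_le_pow _ _ (by omega)
      exact Nat.one_le_iff_ne_zero.2 (by positivity)
    have h4 : 4 * (r ^ 3 * c ^ E) ≤ r ^ 5 * c ^ E := by
      calc 4 * (r ^ 3 * c ^ E) ≤ (r * r) * (r ^ 3 * c ^ E) := Nat.mul_le_mul_right _ hrr
        _ = r ^ 5 * c ^ E := by ring
    unfold C0
    omega
  -- step 2 : C0^3 ≤ r^(7*E + 15)
  have hC03 : (C0 r (2 * c ^ E)) ^ 3 ≤ r ^ (7 * E + 15) := by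
    calc (C0 r (2 * c ^ E)) ^ 3 ≤ (r ^ 5 * c ^ E) ^ 3 := Nat.pow_le_pow_left hC0 3
      _ = r ^ 15 * (c ^ 3) ^ E := by ring
      _ ≤ r ^ 15 * (r ^ 7) ^ E :=
          Nat.mul_le_mul_left _ (Nat.pow_le_pow_left (hcdef ▸ c_cubed_le hr) E)
      _ = r ^ (7 * E + 15) := by
          rw [← pow_mul, ← pow_add]
          congr 1
          omega
  -- exponent arithmetic
  have hLl : L ≤ ℓ * ℓ := by
    rw [hLdef]
    have h1 : ℓ - 1 + 1 = ℓ := by omega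
    calc (ℓ - 1) * (ℓ - 1) + 1 ≤ (ℓ - 1) * (ℓ - 1) + (2 * (ℓ - 1) + 1) := by omega
      _ = ((ℓ - 1) + 1) * ((ℓ - 1) + 1) := by ring
      _ = ℓ * ℓ := by rw [h1]
  have hL1 : L - 1 ≤ ℓ * ℓ := le_trans (Nat.sub_le _ _) hLl
  have hl4 : 4 * (ℓ * ℓ) ≤ ℓ ^ 4 := by
    have h4l : 4 ≤ ℓ * ℓ := Nat.mul_le_mul hℓ hℓ
    calc 4 * (ℓ * ℓ) ≤ (ℓ * ℓ) * (ℓ * ℓ) := Nat.mul_le_mul_right _ h4l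
      _ = ℓ ^ 4 := by ring
  have hrc2 : 2 * r.choose 2 = r * (r - 1) := two_mul_choose_two (by omega)
  have hmain : (7 * E + 15) * ((pairs r).card * (L - 1)) ≤
      3 * (30 * (r.choose 2) ^ 2 * ℓ ^ 4) := by
    have hEbound : 7 * E + 15 = 14 * c * L + 7 * c + 22 := by rw [hEdef]; ring
    have hstep : (14 * c * L + 7 * c + 22) * (L - 1) ≤
        (14 * c * (ℓ * ℓ) + 7 * c + 22) * (ℓ * ℓ) :=
      Nat.mul_le_mul (Nat.add_le_add_right (Nat.add_le_add_right
        (Nat.mul_le_mul_left _ hLl) _) _) hL1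
    have hkey : 4 * ((14 * c * (ℓ * ℓ) + 7 * c + 22) * (ℓ * ℓ)) ≤
        (63 * c + 22) * (ℓ ^ 4) := by
      have h3 : (7 * c + 22) * (4 * (ℓ * ℓ)) ≤ (7 * c + 22) * ℓ ^ 4 :=
        Nat.mul_le_mul_left _ hl4
      calc 4 * ((14 * c * (ℓ * ℓ) + 7 * c + 22) * (ℓ * ℓ))
          = 56 * c * (ℓ ^ 4) + (7 * c + 22) * (4 * (ℓ * ℓ)) := by ring
        _ ≤ 56 * c * (ℓ ^ 4) + (7 * c + 22) * (ℓ ^ 4) := Nat.add_le_add_left h3 _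
        _ = (63 * c + 22) * ℓ ^ 4 := by ring
    have hfin : (63 * c + 22) ≤ 180 * (r * (r - 1)) := by
      have h1 : r * (r - 1) + r = r * r := by
        have h0 : r - 1 + 1 = r := by omega
        calc r * (r - 1) + r = r * ((r - 1) + 1) := by ring
          _ = r * r := by rw [h0]
      have h2 : 243 * r ≤ 117 * (r * r) + 41 := by
        rcases eq_or_lt_of_le hr with h2' | h3'
        · rw [← h2']; norm_num
        · have hr3 : 3 ≤ r := h3'
          have h3r : 3 * r ≤ r * r := Nat.mul_le_mul_right _ hr3
          calc 243 * r = 81 * (3 * r) := by ring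
            _ ≤ 81 * (r * r) := Nat.mul_le_mul_left _ h3r
            _ ≤ 117 * (r * r) + 41 := by omega
      rw [hcdef]
      omega
    have hp2 : (pairs r).card ≤ r.choose 2 := pairs_card_le_choose
    calc (7 * E + 15) * ((pairs r).card * (L - 1))
        ≤ (14 * c * L + 7 * c + 22) * ((r.choose 2) * (L - 1)) :=
          Nat.mul_le_mul (le_of_eq hEbound) (Nat.mul_le_mul_right _ hp2)
      _ = (r.choose 2) * ((14 * c * L + 7 * c + 22) * (L - 1)) := by ring
      _ ≤ (r.choose 2) * ((14 * c * (ℓ * ℓ) + 7 * c + 22) * (ℓ * ℓ)) :=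
          Nat.mul_le_mul_left _ hstep
      _ ≤ 3 * (30 * (r.choose 2) ^ 2 * ℓ ^ 4) := by
          have h4 : 4 * ((r.choose 2) * ((14 * c * (ℓ * ℓ) + 7 * c + 22) * (ℓ * ℓ))) ≤
              (r.choose 2) * ((63 * c + 22) * ℓ ^ 4) := by
            calc 4 * ((r.choose 2) * ((14 * c * (ℓ * ℓ) + 7 * c + 22) * (ℓ * ℓ)))
                = (r.choose 2) * (4 * ((14 * c * (ℓ * ℓ) + 7 * c + 22) * (ℓ * ℓ))) := by ring
              _ ≤ (r.choose 2) * ((63 * c + 22) * (ℓ ^ 4)) :=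
                  Nat.mul_le_mul_left _ hkey
          have h5 : (r.choose 2) * ((63 * c + 22) * ℓ ^ 4) ≤
              (r.choose 2) * ((180 * (r * (r - 1))) * ℓ ^ 4) :=
            Nat.mul_le_mul_left _ (Nat.mul_le_mul_right _ hfin)
          have h6 : (r.choose 2) * ((180 * (r * (r - 1))) * ℓ ^ 4) =
              4 * (3 * (30 * (r.choose 2) ^ 2 * ℓ ^ 4)) := by
            rw [← hrc2]; ring
          omega
  -- conclude via cubes
  have hfinal3 : ((C0 r (2 * c ^ E)) ^ ((pairs r).card * (L - 1))) ^ 3 ≤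
      (r ^ (30 * (r.choose 2) ^ 2 * ℓ ^ 4)) ^ 3 := by
    calc ((C0 r (2 * c ^ E)) ^ ((pairs r).card * (L - 1))) ^ 3
        = ((C0 r (2 * c ^ E)) ^ 3) ^ ((pairs r).card * (L - 1)) := by
          rw [← pow_mul, ← pow_mul]
          congr 1
          omega
      _ ≤ (r ^ (7 * E + 15)) ^ ((pairs r).card * (L - 1)) :=
          Nat.pow_le_pow_left hC03 _
      _ = r ^ ((7 * E + 15) * ((pairs r).card * (L - 1))) := by rw [← pow_mul]
      _ ≤ r ^ (3 * (30 * (r.choose 2) ^ 2 * ℓ ^ 4)) :=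
          Nat.pow_le_pow_right (by omega) hmain
      _ = (r ^ (30 * (r.choose 2) ^ 2 * ℓ ^ 4)) ^ 3 := by
          rw [← pow_mul]
          congr 1
          omega
  exact (Nat.pow_le_pow_iff_left (by norm_num : (3 : ℕ) ≠ 0)).1 hfinal3

end Arith
end Sub14

namespace Sub14

variable {r : ℕ} [NeZero r]

/-- choose column indices for the realization and monotonize with Erdős–Szekeres -/
lemma assemble {m n L ℓ : ℕ} (hℓ : 1 ≤ ℓ) (hL : L = (ℓ - 1) * (ℓ - 1) + 1)
    (A : Matrix (Fin m) (Fin n) (Fin r))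
    (y : Fin L → (Fin m → Fin r)) (hy : Function.Injective y)
    (hyS : ∀ q, y q ∈ (Finset.univ.image fun j : Fin n => fun i : Fin m => A i j)) :
    ∃ (t : Fin ℓ → Fin L) (σ : Fin ℓ → Fin n), StrictMono t ∧ StrictMono σ ∧
      ((∀ i' : Fin m, ∀ q : Fin ℓ, A i' (σ q) = y (t q) i') ∨
       (∀ i' : Fin m, ∀ q : Fin ℓ, A i' (σ q) = y (t (q.rev)) i')) := by
  have hex : ∀ q, ∃ jdx : Fin n, (fun i => A i jdx) = y q := by
    intro q
    obtain ⟨jdx, _, hj⟩ := Finset.mem_image.1 (hyS q)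
    exact ⟨jdx, hj⟩
  choose σ0 hσ0 using hex
  have hσ0inj : Function.Injective σ0 := by
    intro q q' h
    apply hy
    rw [← hσ0 q, ← hσ0 q', h]
  set f : ℕ → ℕ := fun k => if h : k < L then ((σ0 ⟨k, h⟩ : Fin n) : ℕ) else 0 with hf
  have hfinj : ∀ i j, i < L → j < L → i ≠ j → f i ≠ f j := by
    intro i j hi hj hij
    simp only [hf, dif_pos hi, dif_pos hj]
    intro hval
    have : σ0 ⟨i, hi⟩ = σ0 ⟨j, hj⟩ := Fin.ext hval
    have := hσ0inj this
    exact hij (by simpa [Fin.ext_iff] using this)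
  obtain ⟨g, hg, hgN, hcase⟩ := erdos_szekeres hℓ (by omega) f hfinj
  set t : Fin ℓ → Fin L := fun q => ⟨g q, hgN q⟩ with ht
  have htm : StrictMono t := by
    intro p q h
    simp only [ht, Fin.mk_lt_mk]
    exact hg h
  have hfg : ∀ q : Fin ℓ, f (g q) = ((σ0 (t q) : Fin n) : ℕ) := by
    intro q
    simp only [hf, dif_pos (hgN q)]
    rfl
  rcases hcase with hmono | hanti
  · refine ⟨t, fun q => σ0 (t q), htm, ?_, Or.inl ?_⟩
    · intro p q h
      have h2 : f (g p) < f (g q) := hmono h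
      rw [hfg p, hfg q] at h2
      exact h2
    · intro i' q
      exact congrFun (hσ0 (t q)) i'
  · refine ⟨t, fun q => σ0 (t (q.rev)), htm, ?_, Or.inr ?_⟩
    · intro p q h
      have hrev : q.rev < p.rev := Fin.rev_lt_rev.2 h
      have h2 : f (g p.rev) < f (g q.rev) := hanti hrev
      rw [hfg q.rev, hfg p.rev] at h2
      exact h2
    · intro i' q
      exact congrFun (hσ0 (t q.rev)) i'

end Sub14

open Sub14 in
/-- (Forbidden submatrices.) For every `r ≥ 2`, with
`c_r = 30·(r choose 2)²·log₂ r` (so `2^{c_r·ℓ⁴} = r^{30·(r choose 2)²·ℓ⁴}`): for every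
`ℓ ≥ 2`, every matrix with entries in `{0,…,r−1}` having more than `2^{c_r·ℓ⁴}`
distinct columns contains as a submatrix (rows and columns both selected in
increasing order) one of `I_ℓ(a,b)`, `T_ℓ(a,b)`, `I_ℓᴿ(a,b)`, `T_ℓᴿ(a,b)` for some
`a ≠ b`, where `ᴿ` denotes reversal of the column order. -/
theorem submatrix_main (r : ℕ) (hr : 2 ≤ r) (ℓ : ℕ) (hℓ : 2 ≤ ℓ) (m n : ℕ)
    (A : Matrix (Fin m) (Fin n) (Fin r))
    (hn : r ^ (30 * (r.choose 2) ^ 2 * ℓ ^ 4) <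
      (Finset.univ.image fun j : Fin n => fun i : Fin m => A i j).card) :
    ∃ a b : Fin r, a ≠ b ∧ ∃ ρ : Fin ℓ → Fin m, ∃ σ : Fin ℓ → Fin n,
      StrictMono ρ ∧ StrictMono σ ∧
      ((∀ i j, A (ρ i) (σ j) = Imat ℓ r a b i j) ∨
       (∀ i j, A (ρ i) (σ j) = Tmat ℓ r a b i j) ∨
       (∀ i j, A (ρ i) (σ j) = Imat ℓ r a b i j.rev) ∨
       (∀ i j, A (ρ i) (σ j) = Tmat ℓ r a b i j.rev)) := by
  haveI : NeZero r := ⟨by omega⟩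
  have hL2 : 2 ≤ (ℓ - 1) * (ℓ - 1) + 1 := by
    have h1 : 1 * 1 ≤ (ℓ - 1) * (ℓ - 1) := Nat.mul_le_mul (by omega) (by omega)
    omega
  have hfound : Found ((ℓ - 1) * (ℓ - 1) + 1)
      (Finset.univ.image fun j : Fin n => fun i : Fin m => A i j) := by
    refine family_found (L := (ℓ - 1) * (ℓ - 1) + 1)
      (S2 := 2 * (r * r - 1 + r) ^ ((r * r - 1 + r) *
        (2 * ((ℓ - 1) * (ℓ - 1) + 1) + 1) + 1)) hL2 ?_ ?_ ?_
    · have hpos : 0 < 2 * (r * r - 1 + r) ^ ((r * r - 1 + r) *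
        (2 * ((ℓ - 1) * (ℓ - 1) + 1) + 1) + 1) := by positivity
      omega
    · intro m' F a b hab hst
      exact stair_found hL2 hab hst
    · calc (C0 r (2 * (r * r - 1 + r) ^ ((r * r - 1 + r) *
          (2 * ((ℓ - 1) * (ℓ - 1) + 1) + 1) + 1))) ^
            ((pairs r).card * (((ℓ - 1) * (ℓ - 1) + 1) - 1))
          ≤ r ^ (30 * (r.choose 2) ^ 2 * ℓ ^ 4) :=
            threshold_le_gen ℓ _ _ _ hr hℓ rfl rfl rfl
        _ < _ := hn
  obtain ⟨a, b, hab, hpat⟩ := hfound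
  refine ⟨a, b, hab, ?_⟩
  rcases hpat with hIR | hTR
  · obtain ⟨i, y, hi, hy, hyS, hval⟩ := hIR
    obtain ⟨t, σ, htm, hσm, hcase⟩ := assemble (by omega) rfl A y hy hyS
    refine ⟨fun p => i (t p), σ, fun p q h => hi (htm h), hσm, ?_⟩
    rcases hcase with hc | hc
    · left
      intro p q
      rw [hc (i (t p)) q, hval (t p) (t q)]
      unfold Imat
      by_cases hpq : p = q
      · rw [if_pos (by rw [hpq]), if_pos hpq]
      · rw [if_neg (fun h => hpq (htm.injective h)), if_neg hpq]
    · right; right; left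
      intro p q
      rw [hc (i (t p)) q, hval (t p) (t q.rev)]
      unfold Imat
      by_cases hpq : p = q.rev
      · rw [if_pos (by rw [hpq]), if_pos hpq]
      · rw [if_neg (fun h => hpq (htm.injective h)), if_neg hpq]
  · obtain ⟨i, y, hi, hy, hyS, hval⟩ := hTR
    obtain ⟨t, σ, htm, hσm, hcase⟩ := assemble (by omega) rfl A y hy hyS
    refine ⟨fun p => i (t p), σ, fun p q h => hi (htm h), hσm, ?_⟩
    rcases hcase with hc | hc
    · right; left
      intro p q
      rw [hc (i (t p)) q, hval (t p) (t q)]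
      unfold Tmat
      by_cases hpq : (q : ℕ) < (p : ℕ)
      · have hlt : ((t q : Fin ((ℓ - 1) * (ℓ - 1) + 1)) : ℕ) < ((t p : Fin ((ℓ - 1) * (ℓ - 1) + 1)) : ℕ) :=
          htm (show q < p from hpq)
        rw [if_pos hlt, if_pos hpq]
      · have hlt : ¬ (((t q : Fin ((ℓ - 1) * (ℓ - 1) + 1)) : ℕ) < ((t p : Fin ((ℓ - 1) * (ℓ - 1) + 1)) : ℕ)) :=
          fun h => hpq (htm.lt_iff_lt.1 h)
        rw [if_neg hlt, if_neg hpq]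
    · right; right; right
      intro p q
      rw [hc (i (t p)) q, hval (t p) (t q.rev)]
      unfold Tmat
      by_cases hpq : ((q.rev : Fin ℓ) : ℕ) < (p : ℕ)
      · have hlt : ((t q.rev : Fin ((ℓ - 1) * (ℓ - 1) + 1)) : ℕ) < ((t p : Fin ((ℓ - 1) * (ℓ - 1) + 1)) : ℕ) :=
          htm (show q.rev < p from hpq)
        rw [if_pos hlt, if_pos hpq]
      · have hlt : ¬ (((t q.rev : Fin ((ℓ - 1) * (ℓ - 1) + 1)) : ℕ) < ((t p : Fin ((ℓ - 1) * (ℓ - 1) + 1)) : ℕ)) :=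
          fun h => hpq (htm.lt_iff_lt.1 h)
        rw [if_neg hlt, if_neg hpq]
end

section
/- (Balogh–Bollobás.) For every ℓ ≥ 2 and every m ≥ 1, forb(m, {I_ℓ, I_ℓ^c, T_ℓ}) ≤ (2ℓ)^{2^ℓ}. That is, every m-rowed simple (0,1)-matrix with more than (2ℓ)^{2^ℓ} columns contains I_ℓ, I_ℓ^c, or T_ℓ as a configuration. -/
set_option linter.unusedSectionVars false
set_option maxHeartbeats 1000000

namespace BBproof

variable {X : Type*} [DecidableEq X] [Fintype X] [LinearOrder X]

def HasPat (P : ℕ → ℕ → Prop) (k : ℕ) (F : Finset (Finset X)) : Prop :=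
  ∃ r : Fin k → X, ∃ C : Fin k → Finset X,
    (∀ j, C j ∈ F) ∧ ∀ i j, (r i ∈ C j ↔ P i.1 j.1)

theorem HasPat.mono {P : ℕ → ℕ → Prop} {k : ℕ} {F F' : Finset (Finset X)}
    (hFF : F ⊆ F') : HasPat P k F → HasPat P k F' := by
  rintro ⟨r, C, h1, h2⟩; exact ⟨r, C, fun j => hFF (h1 j), h2⟩

theorem lift_trace {P : ℕ → ℕ → Prop} {k : ℕ} {R : Finset X}
    {D F : Finset (Finset X)}
    (hreal : ∀ u ∈ D, ∃ S ∈ F, S ∩ R = u)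
    (hP : ∀ i : Fin k, ∃ j : Fin k, P i.1 j.1) :
    HasPat P k D → HasPat P k F := by
  rintro ⟨r, C, h1, h2⟩
  choose S hS hSR using fun j => hreal (C j) (h1 j)
  have hr : ∀ i, r i ∈ R := by
    intro i
    obtain ⟨j0, hj0⟩ := hP i
    have h := (h2 i j0).mpr hj0
    rw [← hSR j0] at h
    exact (Finset.mem_inter.mp h).2
  refine ⟨r, S, hS, fun i j => ?_⟩
  rw [← h2 i j, ← hSR j]
  simp [Finset.mem_inter, hr i]

theorem lift_T_prepend {c : ℕ} {A₀ : Finset X} {p : X}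
    {D F : Finset (Finset X)} (hA₀ : A₀ ∈ F) (hp : p ∈ A₀)
    (hreal : ∀ v ∈ D, ∃ S ∈ F, S \ A₀ = v ∧ p ∈ S) :
    HasPat (· ≤ ·) c D → HasPat (· ≤ ·) (c + 1) F := by
  rintro ⟨r, C, h1, h2⟩
  choose S hS hSd hpS using fun j => hreal (C j) (h1 j)
  have hr : ∀ i, r i ∉ A₀ := by
    intro i
    have h : r i ∈ C i := (h2 i i).mpr le_rfl
    rw [← hSd i] at h
    exact (Finset.mem_sdiff.mp h).2
  refine ⟨fun i => Fin.cases p (fun i' => r i') i,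
          fun j => Fin.cases A₀ (fun j' => S j') j, ?_, ?_⟩
  · intro j
    induction j using Fin.cases with
    | zero => simpa using hA₀
    | succ j' => simpa using hS j'
  · intro i j
    induction i using Fin.cases with
    | zero =>
      induction j using Fin.cases with
      | zero => simp [hp]
      | succ j' => simp [hpS j']
    | succ i' =>
      induction j using Fin.cases with
      | zero =>
        simp only [Fin.cases_zero, Fin.cases_succ, Fin.val_succ, Fin.val_zero]
        exact iff_of_false (hr i') (by omega)
      | succ j' =>
        simp only [Fin.cases_succ, Fin.val_succ]
        have h : r i' ∈ S j' ↔ r i' ∈ C j' := by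
          rw [← hSd j']; simp [Finset.mem_sdiff, hr i']
        rw [h, h2 i' j']
        omega

theorem lift_T_append {c : ℕ} {A₀ : Finset X} {h : X}
    {D F : Finset (Finset X)} (hA₀ : A₀ ∈ F) (hh : h ∈ A₀)
    (hreal : ∀ u ∈ D, h ∉ u ∧ ∃ S ∈ F, S ∩ A₀ = u) :
    HasPat (· ≤ ·) c D → HasPat (· ≤ ·) (c + 1) F := by
  rintro ⟨r, C, h1, h2⟩
  have hhole : ∀ j, h ∉ C j := fun j => (hreal (C j) (h1 j)).1
  choose S hS hStr using fun j => (hreal (C j) (h1 j)).2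
  have hr : ∀ i, r i ∈ A₀ := by
    intro i
    have hmem : r i ∈ C i := (h2 i i).mpr le_rfl
    rw [← hStr i] at hmem
    exact (Finset.mem_inter.mp hmem).2
  refine ⟨fun i => Fin.lastCases h (fun i' => r i') i,
          fun j => Fin.lastCases A₀ (fun j' => S j') j, ?_, ?_⟩
  · intro j
    induction j using Fin.lastCases with
    | last => simpa using hA₀
    | cast j' => simpa using hS j'
  · intro i j
    induction i using Fin.lastCases with
    | last =>
      induction j using Fin.lastCases with
      | last => simp [hh]
      | cast j' =>
        simp only [Fin.lastCases_last, Fin.lastCases_castSucc, Fin.val_last,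
          Fin.coe_castSucc]
        refine iff_of_false (fun hmem => ?_) (by have := j'.isLt; omega)
        exact hhole j' (by rw [← hStr j']; exact Finset.mem_inter.mpr ⟨hmem, hh⟩)
    | cast i' =>
      induction j using Fin.lastCases with
      | last =>
        simp only [Fin.lastCases_last, Fin.lastCases_castSucc, Fin.val_last,
          Fin.coe_castSucc]
        exact iff_of_true (hr i') (by have := i'.isLt; omega)
      | cast j' =>
        simp only [Fin.lastCases_castSucc, Fin.coe_castSucc]
        have hmem : r i' ∈ S j' ↔ r i' ∈ C j' := by
          rw [← hStr j']; simp [Finset.mem_inter, hr i']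
        rw [hmem, h2 i' j']

def NoMatch (d : ℕ) (F : Finset (Finset X)) : Prop :=
  ¬ ∃ D : Fin d → Finset X, (∀ i, D i ∈ F) ∧ (∀ i, (D i).Nonempty) ∧
      ∀ i j, i ≠ j → Disjoint (D i) (D j)

theorem noMatch_of_noI {k : ℕ} {F : Finset (Finset X)}
    (hI : ¬ HasPat (fun a b => a = b) k F) : NoMatch k F := by
  rintro ⟨D, h1, h2, h3⟩
  apply hI
  refine ⟨fun i => (h2 i).choose, D, h1, fun i j => ?_⟩
  by_cases hij : i = j
  · subst hij
    exact iff_of_true (h2 i).choose_spec rfl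
  · refine iff_of_false (fun hmem => ?_) (fun hv => hij (Fin.ext hv))
    exact (Finset.disjoint_left.mp (h3 i j hij)) (h2 i).choose_spec hmem

def G (ℓ : ℕ) : ℕ → ℕ
  | 0 => 1
  | 1 => 1
  | (c+2) => 1 + (ℓ-1) * (1 + G ℓ (c+1) + (ℓ-1) * (G ℓ (c+1))^2)

theorem G_pos (ℓ : ℕ) : ∀ c, 1 ≤ G ℓ c
  | 0 => le_refl 1
  | 1 => le_refl 1
  | (_+2) => Nat.le_add_right 1 _

theorem G_succ_eq (ℓ c : ℕ) (hc : 1 ≤ c) :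
    G ℓ (c+1) = 1 + (ℓ-1) * (1 + G ℓ c + (ℓ-1) * (G ℓ c)^2) := by
  obtain ⟨c', rfl⟩ : ∃ c', c = c' + 1 := ⟨c - 1, by omega⟩
  rfl

theorem G_step_le (ℓ g : ℕ) (hℓ : 2 ≤ ℓ) (hg : 1 ≤ g) :
    1 + (ℓ-1) * (1 + g + (ℓ-1) * g^2) ≤ ℓ^2 * g^2 := by
  obtain ⟨a, rfl⟩ : ∃ a, ℓ = a + 2 := ⟨ℓ - 2, by omega⟩
  obtain ⟨f, rfl⟩ : ∃ f, g = f + 1 := ⟨g - 1, by omega⟩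
  have h1 : a + 2 - 1 = a + 1 := by omega
  rw [h1]
  ring_nf
  nlinarith [Nat.zero_le (a*a*f), Nat.zero_le (a*f*f), Nat.zero_le (f*f), Nat.zero_le (a*f)]

theorem G_le (ℓ : ℕ) (hℓ : 2 ≤ ℓ) : ∀ c, 1 ≤ c → G ℓ c ≤ ℓ ^ (2^c - 2) := by
  intro c hc
  induction c, hc using Nat.le_induction with
  | base => simp [G]
  | succ c hc IH =>
    rw [G_succ_eq ℓ c hc]
    calc 1 + (ℓ-1) * (1 + G ℓ c + (ℓ-1) * (G ℓ c)^2)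
        ≤ ℓ^2 * (G ℓ c)^2 := G_step_le ℓ _ hℓ (G_pos ℓ c)
      _ ≤ ℓ^2 * (ℓ ^ (2^c - 2))^2 := by
          exact Nat.mul_le_mul_left _ (Nat.pow_le_pow_left IH 2)
      _ = ℓ ^ (2 + (2^c - 2) * 2) := by rw [← pow_mul, ← pow_add]
      _ = ℓ ^ (2^(c+1) - 2) := by
          congr 1
          have h2 : 2 ≤ 2^c := by
            calc 2 = 2^1 := rfl
            _ ≤ 2^c := Nat.pow_le_pow_right (by norm_num) hc
          have h3 : 2^(c+1) = 2^c * 2 := pow_succ 2 c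
          omega

theorem family_bound (ℓ : ℕ) (hℓ : 2 ≤ ℓ) :
    ∀ c, 1 ≤ c → ∀ F : Finset (Finset X),
      ¬ HasPat (fun a b => a = b) ℓ F → ¬ HasPat (fun a b => a ≠ b) ℓ F →
      ¬ HasPat (fun a b => a ≤ b) c F → F.card ≤ G ℓ c := by
  intro c hc
  induction c, hc using Nat.le_induction with
  | base =>
    intro F _ _ hT
    have hall : F ⊆ {∅} := by
      intro S hS
      rw [Finset.mem_singleton]
      by_contra hne
      obtain ⟨x, hx⟩ := Finset.nonempty_iff_ne_empty.mpr hne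
      exact hT ⟨fun _ => x, fun _ => S, fun _ => hS,
        fun i j => iff_of_true hx (by have := i.isLt; have := j.isLt; omega)⟩
    calc F.card ≤ ({∅} : Finset (Finset X)).card := Finset.card_le_card hall
      _ = 1 := by simp
      _ = G ℓ 1 := rfl
  | succ c hc IH =>
    intro F hI0 hIc0 hT0
    have hPne : ∀ i : Fin ℓ, ∃ j : Fin ℓ, i.1 ≠ j.1 := by
      intro i
      refine ⟨⟨if i.1 = 0 then 1 else 0, ?_⟩, ?_⟩
      · split <;> omega
      · show i.1 ≠ (if i.1 = 0 then 1 else 0)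
        split <;> omega
    have key : ∀ d (F' : Finset (Finset X)),
        ¬ HasPat (fun a b => a = b) ℓ F' → ¬ HasPat (fun a b => a ≠ b) ℓ F' →
        ¬ HasPat (fun a b => a ≤ b) (c+1) F' → NoMatch d F' →
        F'.card ≤ 1 + (d-1) * (1 + G ℓ c + (ℓ-1) * (G ℓ c)^2) := by
      intro d
      induction d with
      | zero =>
        intro F' _ _ _ hM
        exact absurd ⟨Fin.elim0, fun i => i.elim0, fun i => i.elim0,
          fun i => i.elim0⟩ hM
      | succ d ihd =>
        intro F' hI hIc hT hM
        set g := G ℓ c with hgdef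
        set B := 1 + g + (ℓ-1) * g^2 with hBdef
        by_cases hex : ∃ A ∈ F', A.Nonempty
        case neg =>
          have hsub : F' ⊆ {∅} := by
            intro S hS
            rw [Finset.mem_singleton]
            rcases Finset.eq_empty_or_nonempty S with h | h
            · exact h
            · exact absurd ⟨S, hS, h⟩ hex
          calc F'.card ≤ ({∅} : Finset (Finset X)).card := Finset.card_le_card hsub
            _ = 1 := by simp
            _ ≤ 1 + (d + 1 - 1) * B := Nat.le_add_right _ _
        case pos =>
        obtain ⟨A₀, hA₀F, hA₀ne⟩ := hex
        obtain ⟨p, hpA₀⟩ := hA₀ne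
        rcases Nat.eq_zero_or_pos d with rfl | hd
        · exact absurd ⟨fun _ => A₀, fun _ => hA₀F, fun _ => ⟨p, hpA₀⟩,
            fun i j hij => absurd (Fin.ext (by have := i.isLt; have := j.isLt; omega)) hij⟩ hM
        classical
        have hcompl : ∀ S : Finset X, S ∩ (Finset.univ \ A₀) = S \ A₀ := by
          intro S; ext x; simp [Finset.mem_inter, Finset.mem_sdiff]
        set Ad : Finset (Finset X) := F'.filter (fun S => S ∩ A₀ = ∅) with hAdd
        set Bf : Finset (Finset X) := F'.filter (fun S => A₀ ⊆ S ∧ S ≠ A₀) with hBfd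
        set Bp : Finset (Finset X) := F'.filter (fun S => S ∩ A₀ ≠ ∅ ∧ ¬ A₀ ⊆ S) with hBpd
        have hcover : F' ⊆ insert A₀ (Ad ∪ (Bf ∪ Bp)) := by
          intro S hS
          rcases eq_or_ne S A₀ with rfl | hSA
          · exact Finset.mem_insert_self _ _
          apply Finset.mem_insert_of_mem
          by_cases h1 : S ∩ A₀ = ∅
          · exact Finset.mem_union_left _ (Finset.mem_filter.mpr ⟨hS, h1⟩)
          by_cases h2 : A₀ ⊆ S
          · exact Finset.mem_union_right _ (Finset.mem_union_left _
              (Finset.mem_filter.mpr ⟨hS, h2, hSA⟩))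
          · exact Finset.mem_union_right _ (Finset.mem_union_right _
              (Finset.mem_filter.mpr ⟨hS, h1, h2⟩))
        have hcard : F'.card ≤ 1 + (Ad.card + (Bf.card + Bp.card)) := by
          calc F'.card ≤ (insert A₀ (Ad ∪ (Bf ∪ Bp))).card := Finset.card_le_card hcover
            _ ≤ (Ad ∪ (Bf ∪ Bp)).card + 1 := Finset.card_insert_le _ _
            _ ≤ (Ad.card + (Bf ∪ Bp).card) + 1 :=
                Nat.add_le_add_right (Finset.card_union_le _ _) 1
            _ ≤ (Ad.card + (Bf.card + Bp.card)) + 1 :=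
                Nat.add_le_add_right (Nat.add_le_add_left (Finset.card_union_le _ _) _) 1
            _ = 1 + (Ad.card + (Bf.card + Bp.card)) := by omega
        have hAdcard : Ad.card ≤ 1 + (d-1) * B := by
          apply ihd Ad (fun h => hI (h.mono (Finset.filter_subset _ _)))
            (fun h => hIc (h.mono (Finset.filter_subset _ _)))
            (fun h => hT (h.mono (Finset.filter_subset _ _)))
          rintro ⟨D, h1, h2, h3⟩
          apply hM
          refine ⟨fun i => Fin.cases A₀ (fun i' => D i') i, ?_, ?_, ?_⟩
          · intro i
            induction i using Fin.cases with
            | zero => simpa using hA₀F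
            | succ i' => simpa using (Finset.mem_filter.mp (h1 i')).1
          · intro i
            induction i using Fin.cases with
            | zero => simpa using ⟨p, hpA₀⟩
            | succ i' => simpa using h2 i'
          · intro i j hij
            rcases Fin.eq_zero_or_eq_succ i with rfl | ⟨i', rfl⟩ <;>
              rcases Fin.eq_zero_or_eq_succ j with rfl | ⟨j', rfl⟩
            · exact absurd rfl hij
            · simp only [Fin.cases_zero, Fin.cases_succ]
              exact (Finset.disjoint_iff_inter_eq_empty.mpr
                (Finset.mem_filter.mp (h1 j')).2).symm
            · simp only [Fin.cases_zero, Fin.cases_succ]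
              exact Finset.disjoint_iff_inter_eq_empty.mpr
                (Finset.mem_filter.mp (h1 i')).2
            · simp only [Fin.cases_succ]
              exact h3 i' j' (fun h => hij (congrArg Fin.succ h))
        have hBfcard : Bf.card ≤ g := by
          have hinj : Set.InjOn (fun S => S \ A₀) Bf := by
            intro S hS S' hS' hEq
            have hf1 := Finset.mem_filter.mp hS
            have hf2 := Finset.mem_filter.mp hS'
            ext x
            by_cases hx : x ∈ A₀
            · simp [hf1.2.1 hx, hf2.2.1 hx]
            · have := Finset.ext_iff.mp hEq x
              simpa [Finset.mem_sdiff, hx] using this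
          rw [← Finset.card_image_of_injOn hinj]
          have hreal : ∀ v ∈ Bf.image (fun S => S \ A₀),
              ∃ S ∈ F', S ∩ (Finset.univ \ A₀) = v := by
            intro v hv
            obtain ⟨S, hSmem, rfl⟩ := Finset.mem_image.mp hv
            exact ⟨S, (Finset.mem_filter.mp hSmem).1, hcompl S⟩
          apply IH
          · exact fun h => hI (lift_trace hreal (fun i => ⟨i, rfl⟩) h)
          · exact fun h => hIc (lift_trace hreal hPne h)
          · intro h
            apply hT
            refine lift_T_prepend hA₀F hpA₀ ?_ h
            intro v hv
            obtain ⟨S, hSmem, rfl⟩ := Finset.mem_image.mp hv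
            have hf := Finset.mem_filter.mp hSmem
            exact ⟨S, hf.1, rfl, hf.2.1 hpA₀⟩
        have hfib : ∀ u ∈ Bp.image (fun S => S ∩ A₀),
            (Bp.filter (fun S => S ∩ A₀ = u)).card ≤ g := by
          intro u hu
          obtain ⟨S₀, hS₀mem, hS₀u⟩ := Finset.mem_image.mp hu
          have hS₀f := Finset.mem_filter.mp hS₀mem
          have hune : u.Nonempty := by
            rw [← hS₀u]; exact Finset.nonempty_iff_ne_empty.mpr hS₀f.2.1
          obtain ⟨q, hq⟩ := hune
          have hqA₀ : q ∈ A₀ := by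
            rw [← hS₀u] at hq; exact (Finset.mem_inter.mp hq).2
          have hCu : ∀ S ∈ Bp.filter (fun S => S ∩ A₀ = u), S ∩ A₀ = u :=
            fun S hS => (Finset.mem_filter.mp hS).2
          have hCF : ∀ S ∈ Bp.filter (fun S => S ∩ A₀ = u), S ∈ F' := fun S hS =>
            (Finset.mem_filter.mp ((Finset.filter_subset _ _) hS)).1
          have hinj : Set.InjOn (fun S => S \ A₀) (Bp.filter (fun S => S ∩ A₀ = u)) := by
            intro S hS S' hS' hEq
            ext x
            by_cases hx : x ∈ A₀
            · constructor
              · intro hxS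
                have hxu : x ∈ u := by
                  rw [← hCu S hS]; exact Finset.mem_inter.mpr ⟨hxS, hx⟩
                rw [← hCu S' hS'] at hxu; exact (Finset.mem_inter.mp hxu).1
              · intro hxS
                have hxu : x ∈ u := by
                  rw [← hCu S' hS']; exact Finset.mem_inter.mpr ⟨hxS, hx⟩
                rw [← hCu S hS] at hxu; exact (Finset.mem_inter.mp hxu).1
            · have := Finset.ext_iff.mp hEq x
              simpa [Finset.mem_sdiff, hx] using this
          rw [← Finset.card_image_of_injOn hinj]
          have hreal : ∀ v ∈ (Bp.filter (fun S => S ∩ A₀ = u)).image (fun S => S \ A₀),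
              ∃ S ∈ F', S ∩ (Finset.univ \ A₀) = v := by
            intro v hv
            obtain ⟨S, hSmem, rfl⟩ := Finset.mem_image.mp hv
            exact ⟨S, hCF S hSmem, hcompl S⟩
          apply IH
          · exact fun h => hI (lift_trace hreal (fun i => ⟨i, rfl⟩) h)
          · exact fun h => hIc (lift_trace hreal hPne h)
          · intro h
            apply hT
            refine lift_T_prepend hA₀F hqA₀ ?_ h
            intro v hv
            obtain ⟨S, hSmem, rfl⟩ := Finset.mem_image.mp hv
            refine ⟨S, hCF S hSmem, rfl, ?_⟩
            have hqS : q ∈ S ∩ A₀ := by rw [hCu S hSmem]; exact hq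
            exact (Finset.mem_inter.mp hqS).1
        have hTreal : ∀ u ∈ Bp.image (fun S => S ∩ A₀), ∃ S ∈ F', S ∩ A₀ = u := by
          intro u hu
          obtain ⟨S, hSmem, hSu⟩ := Finset.mem_image.mp hu
          exact ⟨S, (Finset.mem_filter.mp hSmem).1, hSu⟩
        have htr : (Bp.image (fun S => S ∩ A₀)).card ≤ (ℓ-1) * g := by
          have hA₀cov : A₀ ∈ A₀.powerset.filter
              (fun H => ∀ u ∈ Bp.image (fun S => S ∩ A₀), ∃ h ∈ H, h ∉ u) := by
            refine Finset.mem_filter.mpr ⟨Finset.mem_powerset_self _, ?_⟩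
            intro u hu
            obtain ⟨S, hSmem, hSu⟩ := Finset.mem_image.mp hu
            obtain ⟨x, hxA₀, hxS⟩ := Finset.not_subset.mp (Finset.mem_filter.mp hSmem).2.2
            exact ⟨x, hxA₀, fun hxu => hxS (by
              rw [← hSu] at hxu; exact (Finset.mem_inter.mp hxu).1)⟩
          obtain ⟨H, hHcov, hHmin⟩ := Finset.exists_min_image _ Finset.card ⟨A₀, hA₀cov⟩
          have hHsub : H ⊆ A₀ := Finset.mem_powerset.mp (Finset.mem_filter.mp hHcov).1
          have hHprop : ∀ u ∈ Bp.image (fun S => S ∩ A₀), ∃ h ∈ H, h ∉ u :=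
            (Finset.mem_filter.mp hHcov).2
          have hHcard : H.card ≤ ℓ - 1 := by
            by_contra hbig
            push_neg at hbig
            have hle : ℓ ≤ H.card := by omega
            obtain ⟨H', hH'sub, hH'card⟩ := Finset.exists_subset_card_eq hle
            have hcrit : ∀ h ∈ H, ∃ u ∈ Bp.image (fun S => S ∩ A₀),
                h ∉ u ∧ ∀ h' ∈ H, h' ≠ h → h' ∈ u := by
              intro h hh
              have herase : H.erase h ∉ A₀.powerset.filter
                  (fun H => ∀ u ∈ Bp.image (fun S => S ∩ A₀), ∃ h ∈ H, h ∉ u) := by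
                intro hmem
                have h5 := hHmin _ hmem
                have h6 : (H.erase h).card < H.card := Finset.card_erase_lt_of_mem hh
                omega
              have hsub' : H.erase h ⊆ A₀ := (Finset.erase_subset _ _).trans hHsub
              have hnc : ¬ ∀ u ∈ Bp.image (fun S => S ∩ A₀), ∃ h' ∈ H.erase h, h' ∉ u := by
                intro hforall
                exact herase (Finset.mem_filter.mpr ⟨Finset.mem_powerset.mpr hsub', hforall⟩)
              push_neg at hnc
              obtain ⟨u, huT, hu⟩ := hnc
              obtain ⟨h'', hh''H, hh''⟩ := hHprop u huT
              have heq : h'' = h := by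
                by_contra hne
                exact hh'' (hu h'' (Finset.mem_erase.mpr ⟨hne, hh''H⟩))
              subst heq
              exact ⟨u, huT, hh'', fun h' hh'H hne => hu h' (Finset.mem_erase.mpr ⟨hne, hh'H⟩)⟩
            set e := H'.orderIsoOfFin hH'card with hedef
            have heinj : Function.Injective (fun i : Fin ℓ => (e i).1) := by
              intro a b hab
              exact e.injective (Subtype.ext hab)
            choose u huT hu1 hu2 using fun i : Fin ℓ => hcrit (e i).1 (hH'sub (e i).2)
            choose S hSF hSu using fun i : Fin ℓ => hTreal (u i) (huT i)
            apply hIc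
            refine ⟨fun i => (e i).1, S, hSF, fun i j => ?_⟩
            have hmem : (e i).1 ∈ S j ↔ (e i).1 ∈ u j := by
              rw [← hSu j]
              simp [Finset.mem_inter, hHsub (hH'sub (e i).2)]
            rw [hmem]
            by_cases hij : i = j
            · subst hij
              exact iff_of_false (hu1 i) (by simp)
            · refine iff_of_true (hu2 j (e i).1 (hH'sub (e i).2) (fun h => hij (heinj h)))
                (fun hv => hij (Fin.ext hv))
          have hsubT : Bp.image (fun S => S ∩ A₀) ⊆
              H.biUnion (fun h => (Bp.image (fun S => S ∩ A₀)).filter (fun v => h ∉ v)) := by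
            intro v hv
            obtain ⟨h, hhH, hhv⟩ := hHprop v hv
            exact Finset.mem_biUnion.mpr ⟨h, hhH, Finset.mem_filter.mpr ⟨hv, hhv⟩⟩
          have hper : ∀ h ∈ H,
              ((Bp.image (fun S => S ∩ A₀)).filter (fun v => h ∉ v)).card ≤ g := by
            intro h hh
            have hreal : ∀ v ∈ (Bp.image (fun S => S ∩ A₀)).filter (fun v => h ∉ v),
                ∃ S ∈ F', S ∩ A₀ = v :=
              fun v hv => hTreal v (Finset.mem_filter.mp hv).1
            apply IH
            · exact fun hp' => hI (lift_trace hreal (fun i => ⟨i, rfl⟩) hp')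
            · exact fun hp' => hIc (lift_trace hreal hPne hp')
            · intro hp'
              apply hT
              refine lift_T_append hA₀F (hHsub hh) ?_ hp'
              intro v hv
              have hf := Finset.mem_filter.mp hv
              exact ⟨hf.2, hTreal v hf.1⟩
          calc (Bp.image (fun S => S ∩ A₀)).card
              ≤ (H.biUnion (fun h => (Bp.image (fun S => S ∩ A₀)).filter (fun v => h ∉ v))).card :=
                Finset.card_le_card hsubT
            _ ≤ H.card * g := Finset.card_biUnion_le_card_mul _ _ _ hper
            _ ≤ (ℓ-1) * g := Nat.mul_le_mul_right _ hHcard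
        have hBpcard : Bp.card ≤ g * ((ℓ-1) * g) := by
          calc Bp.card ≤ g * (Bp.image (fun S => S ∩ A₀)).card :=
                Finset.card_le_mul_card_image _ _ hfib
            _ ≤ g * ((ℓ-1) * g) := Nat.mul_le_mul_left _ htr
        have hsq : (ℓ-1) * g^2 = g * ((ℓ-1) * g) := by ring
        have hdB : d * B = (d-1) * B + B := by
          obtain ⟨d', rfl⟩ : ∃ d', d = d' + 1 := ⟨d - 1, by omega⟩
          simp [Nat.succ_sub_one, Nat.succ_mul]
        have step1 : F'.card ≤ 1 + ((1 + (d-1)*B) + (g + g * ((ℓ-1) * g))) :=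
          hcard.trans (Nat.add_le_add_left
            (Nat.add_le_add hAdcard (Nat.add_le_add hBfcard hBpcard)) 1)
        have step2 : 1 + ((1 + (d-1)*B) + (g + g * ((ℓ-1) * g))) = 1 + d * B := by
          rw [hdB, hBdef]
          ring
        have hfin : F'.card ≤ 1 + d * B := step1.trans (le_of_eq step2)
        simpa using hfin
    have hNM : NoMatch ℓ F := noMatch_of_noI hI0
    have := key ℓ F hI0 hIc0 hT0 hNM
    rw [G_succ_eq ℓ c hc]
    exact this

end BBproof

section Glue

open BBproof

variable {m n : ℕ}

/-- The set of rows where column `j` has a `1`. -/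
def colSet (A : Matrix (Fin m) (Fin n) (Fin 2)) (j : Fin n) : Finset (Fin m) :=
  Finset.univ.filter (fun i => A i j = 1)

theorem colSet_injective {A : Matrix (Fin m) (Fin n) (Fin 2)} (hS : Simple A) :
    Function.Injective (colSet A) := by
  intro j j' h
  apply hS
  funext i
  show A i j = A i j'
  have hx := Finset.ext_iff.mp h i
  simp only [colSet, Finset.mem_filter, Finset.mem_univ, true_and] at hx
  rw [Fin.ext_iff, Fin.ext_iff] at hx
  have h1 := (A i j).isLt
  have h2 := (A i j').isLt
  exact Fin.ext (by simp only [Fin.val_one] at hx; omega)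

theorem haspat_config {k : ℕ} {A : Matrix (Fin m) (Fin n) (Fin 2)}
    {P : ℕ → ℕ → Prop} [inst : ∀ a b, Decidable (P a b)]
    (hd1 : ∀ i j : Fin k, i ≠ j → (P i.1 i.1 ↔ P j.1 i.1) → (P j.1 j.1 ↔ P i.1 j.1) → False)
    (hd2 : ∀ i j : Fin k, i ≠ j → (P i.1 i.1 ↔ P i.1 j.1) → (P j.1 i.1 ↔ P j.1 j.1) → False)
    (h : HasPat P k (Finset.univ.image (colSet A))) :
    ConfigSub (fun i j : Fin k => if P i.1 j.1 then (1 : Fin 2) else 0) A := by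
  obtain ⟨r, C, hC, hiff⟩ := h
  choose σ hσu hσ using fun j => Finset.mem_image.mp (hC j)
  refine ⟨r, σ, ?_, ?_, ?_⟩
  · intro i j hij
    by_contra hne
    have e1 : r i ∈ C i ↔ P i.1 i.1 := hiff i i
    have e2 : r i ∈ C i ↔ P j.1 i.1 := by rw [hij]; exact hiff j i
    have e3 : r j ∈ C j ↔ P j.1 j.1 := hiff j j
    have e4 : r j ∈ C j ↔ P i.1 j.1 := by rw [← hij]; exact hiff i j
    exact hd1 i j hne (e1.symm.trans e2) (e3.symm.trans e4)
  · intro i j hij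
    by_contra hne
    have hCij : C i = C j := by rw [← hσ i, ← hσ j, hij]
    have e1 : P i.1 i.1 ↔ P i.1 j.1 :=
      (hiff i i).symm.trans ((by rw [hCij] : r i ∈ C i ↔ r i ∈ C j).trans (hiff i j))
    have e2 : P j.1 i.1 ↔ P j.1 j.1 :=
      (hiff j i).symm.trans ((by rw [hCij] : r j ∈ C i ↔ r j ∈ C j).trans (hiff j j))
    exact hd2 i j hne e1 e2
  · intro i j
    show A (r i) (σ j) = if P i.1 j.1 then (1 : Fin 2) else 0
    by_cases hp : P i.1 j.1
    · have hmem : r i ∈ C j := (hiff i j).mpr hp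
      rw [← hσ j] at hmem
      simp only [colSet, Finset.mem_filter, Finset.mem_univ, true_and] at hmem
      rw [hmem, if_pos hp]
    · have hmem : r i ∉ C j := fun hmem => hp ((hiff i j).mp hmem)
      rw [← hσ j] at hmem
      simp only [colSet, Finset.mem_filter, Finset.mem_univ, true_and] at hmem
      rw [if_neg hp]
      have hlt := (A (r i) (σ j)).isLt
      have hv : (A (r i) (σ j)).1 ≠ 1 := fun hval => hmem (Fin.ext (by simpa using hval))
      exact Fin.ext (by simpa using (by omega : (A (r i) (σ j)).1 = 0))

theorem Imat10_eq (k : ℕ) :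
    Imat k 2 1 0 = fun i j : Fin k => if i.1 = j.1 then (1 : Fin 2) else 0 := by
  funext i j
  unfold Imat
  by_cases h : i = j
  · rw [if_pos h, if_pos (by rw [h])]
  · rw [if_neg h, if_neg (fun hv => h (Fin.ext hv))]

theorem Imat01_eq (k : ℕ) :
    Imat k 2 0 1 = fun i j : Fin k => if i.1 ≠ j.1 then (1 : Fin 2) else 0 := by
  funext i j
  unfold Imat
  by_cases h : i = j
  · rw [if_pos h, if_neg (not_not_intro (by rw [h]))]
  · rw [if_neg h, if_pos (fun hv => h (Fin.ext hv))]

theorem Tmat01_eq (k : ℕ) :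
    Tmat k 2 0 1 = fun i j : Fin k => if i.1 ≤ j.1 then (1 : Fin 2) else 0 := by
  funext i j
  unfold Tmat
  by_cases h : (j : ℕ) < (i : ℕ)
  · rw [if_pos h, if_neg (by omega)]
  · rw [if_neg h, if_pos (by omega)]

end Glue

/-- (Balogh–Bollobás.) For every `ℓ ≥ 2` and `m ≥ 1`,
`forb(m, {I_ℓ, I_ℓᶜ, T_ℓ}) ≤ (2ℓ)^{2^ℓ}`, where `I_ℓ = I_ℓ(1,0)`,
`I_ℓᶜ = I_ℓ(0,1)` and `T_ℓ = T_ℓ(0,1)`. -/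
theorem balogh_bollobas (ℓ m : ℕ) (hℓ : 2 ≤ ℓ) (hm : 1 ≤ m) :
    forb m 2 ({⟨ℓ, ℓ, Imat ℓ 2 1 0⟩, ⟨ℓ, ℓ, Imat ℓ 2 0 1⟩, ⟨ℓ, ℓ, Tmat ℓ 2 0 1⟩} :
        Set (RMat 2)) ≤ (2 * ℓ) ^ (2 ^ ℓ) := by
  classical
  apply csSup_le
  · -- nonempty : 0 is achieved by the empty matrix
    refine ⟨0, (fun _ j => j.elim0 : Matrix (Fin m) (Fin 0) (Fin 2)), ?_, ?_⟩
    · exact fun j => j.elim0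
    · intro F hF hcfg
      simp only [Set.mem_insert_iff, Set.mem_singleton_iff] at hF
      rcases hF with rfl | rfl | rfl <;>
        · obtain ⟨ρ, σ, -, -, -⟩ := hcfg
          exact (σ ⟨0, by show 0 < ℓ; omega⟩).elim0
  · rintro n ⟨A, hSim, hAv⟩
    set 𝒜 : Finset (Finset (Fin m)) := Finset.univ.image (colSet A) with h𝒜
    have hcard : 𝒜.card = n := by
      rw [h𝒜, Finset.card_image_of_injective _ (colSet_injective hSim),
        Finset.card_univ, Fintype.card_fin]
    have hInot : ¬ BBproof.HasPat (fun a b => a = b) ℓ 𝒜 := by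
      intro h
      apply hAv ⟨ℓ, ℓ, Imat ℓ 2 1 0⟩ (Set.mem_insert _ _)
      show ConfigSub (Imat ℓ 2 1 0) A
      rw [Imat10_eq]
      exact haspat_config
        (fun i j hne h1 _ => (fun hv => hne (Fin.ext hv)) (h1.mp rfl).symm)
        (fun i j hne h1 _ => (fun hv => hne (Fin.ext hv)) (h1.mp rfl)) h
    have hIcnot : ¬ BBproof.HasPat (fun a b => a ≠ b) ℓ 𝒜 := by
      intro h
      apply hAv ⟨ℓ, ℓ, Imat ℓ 2 0 1⟩ (Set.mem_insert_of_mem _ (Set.mem_insert _ _))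
      show ConfigSub (Imat ℓ 2 0 1) A
      rw [Imat01_eq]
      exact haspat_config
        (fun i j hne h1 _ => (h1.mpr (fun hv => hne (Fin.ext hv.symm))) rfl)
        (fun i j hne h1 _ => (h1.mpr (fun hv => hne (Fin.ext hv))) rfl) h
    have hTnot : ¬ BBproof.HasPat (fun a b => a ≤ b) ℓ 𝒜 := by
      intro h
      apply hAv ⟨ℓ, ℓ, Tmat ℓ 2 0 1⟩
        (Set.mem_insert_of_mem _ (Set.mem_insert_of_mem _ rfl))
      show ConfigSub (Tmat ℓ 2 0 1) A
      rw [Tmat01_eq]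
      exact haspat_config
        (fun i j hne h1 h2 => (fun hv => hne (Fin.ext hv))
          (Nat.le_antisymm (h2.mp le_rfl) (h1.mp le_rfl)))
        (fun i j hne h1 h2 => (fun hv => hne (Fin.ext hv))
          (Nat.le_antisymm (h1.mp le_rfl) (h2.mpr le_rfl))) h
    have hbound := BBproof.family_bound ℓ hℓ ℓ (by omega) 𝒜 hInot hIcnot hTnot
    rw [hcard] at hbound
    calc n ≤ BBproof.G ℓ ℓ := hbound
      _ ≤ ℓ ^ (2^ℓ - 2) := BBproof.G_le ℓ hℓ ℓ (by omega)
      _ ≤ ℓ ^ (2^ℓ) := Nat.pow_le_pow_right (by omega) (Nat.sub_le _ _)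
      _ ≤ (2*ℓ) ^ (2^ℓ) := Nat.pow_le_pow_left (by omega) _
end
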